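/- arXiv:1905.08514 — 7 statements merged into one kernel-verified Lean document; each statement's English description precedes it below -/
import Mathlib

section
/- Let n ≥ 1, let 0 ≤ j ≤ n, and let μ = (λ₂ ≥ λ₃ ≥ …) be a partition of j with λ₂ ≤ n − j, so that λ = (n−j, λ₂, λ₃, …) is a partition of n. Then d_λ ≤ C(n,j) · d_μ, where C(n,j) is the binomial coefficient. -/
open Finset


/-- The number of standard Young tableaux of shape `μ`. -/
noncomputable def sytCard (μ : YoungDiagram) : ℕ :=
  Nat.card {f : {c // c ∈ μ.cells} → Fin μ.card //
    Function.Bijective f ∧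
    (∀ a b : {c // c ∈ μ.cells}, a.1.1 = b.1.1 → a.1.2 < b.1.2 → f a < f b) ∧
    (∀ a b : {c // c ∈ μ.cells}, a.1.2 = b.1.2 → a.1.1 < b.1.1 → f a < f b)}

/-- The Young diagram of a partition of `n`. -/
noncomputable def Nat.Partition.toYD {n : ℕ} (p : n.Partition) : YoungDiagram :=
  YoungDiagram.ofRowLens (p.parts.sort (· ≥ ·)) (List.Pairwise.sortedGE (Multiset.pairwise_sort _ _))

/-- The dimension `d_λ` of the irreducible representation of `S_n` indexed by the
partition `λ` of `n`, i.e. the number of standard Young tableaux of shape `λ`. -/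
noncomputable def dPart {n : ℕ} (p : n.Partition) : ℕ := sytCard p.toYD

/-- The type of standard Young tableaux of shape `μ`. -/
def SYT (μ : YoungDiagram) : Type :=
  {f : {c // c ∈ μ.cells} → Fin μ.card //
    Function.Bijective f ∧
    (∀ a b : {c // c ∈ μ.cells}, a.1.1 = b.1.1 → a.1.2 < b.1.2 → f a < f b) ∧
    (∀ a b : {c // c ∈ μ.cells}, a.1.2 = b.1.2 → a.1.1 < b.1.1 → f a < f b)}

instance (μ : YoungDiagram) : Finite (SYT μ) := by unfold SYT; infer_instance

lemma sytCard_eq (μ : YoungDiagram) : sytCard μ = Nat.card (SYT μ) := rfl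

lemma card_cellsOfRowLens (w : List ℕ) : (YoungDiagram.cellsOfRowLens w).card = w.sum := by
  induction w with
  | nil => simp [YoungDiagram.cellsOfRowLens]
  | cons a t ih =>
    rw [YoungDiagram.cellsOfRowLens, Finset.card_union_of_disjoint, Finset.card_map, ih]
    · simp
    · simp only [Finset.disjoint_left, Finset.mem_product, Finset.mem_singleton, Finset.mem_map]
      rintro ⟨i, k⟩ ⟨rfl, -⟩ ⟨⟨i', k'⟩, -, h⟩
      simp only [Function.Embedding.prodMap, Function.Embedding.coeFn_mk, Prod.map_apply,
        Prod.mk.injEq] at h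
      omega

lemma card_ofRowLens (w : List ℕ) (hw : w.SortedGE) :
    (YoungDiagram.ofRowLens w hw).card = w.sum := card_cellsOfRowLens w

lemma ofRowLens_congr {w w' : List ℕ} (h : w = w') (hw : w.SortedGE)
    (hw' : w'.SortedGE) : YoungDiagram.ofRowLens w hw = YoungDiagram.ofRowLens w' hw' := by
  subst h; rfl

lemma orderEmbOfFin_congr {α : Type*} [LinearOrder α] {s t : Finset α} (h : s = t) {k : ℕ}
    (hs : s.card = k) (ht : t.card = k) : s.orderEmbOfFin hs = t.orderEmbOfFin ht := by
  subst h; rfl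

lemma syt_le_aux (A B : YoungDiagram) (m : ℕ)
    (h0 : ∀ k : ℕ, ((0 : ℕ), k) ∈ A ↔ k < m)
    (h1 : ∀ i k : ℕ, ((i + 1 : ℕ), k) ∈ A ↔ (i, k) ∈ B)
    (hc : A.card = m + B.card) :
    sytCard A ≤ (A.card).choose B.card * sytCard B := by
  classical
  have hmem : ∀ c : {c // c ∈ B.cells}, ((c.1.1 + 1, c.1.2) : ℕ × ℕ) ∈ A.cells := fun c => by
    rw [YoungDiagram.mem_cells, h1]
    simpa [YoungDiagram.mem_cells] using c.2
  set e : {c // c ∈ B.cells} → {c // c ∈ A.cells} := fun c => ⟨(c.1.1 + 1, c.1.2), hmem c⟩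
    with he_def
  have he : Function.Injective e := by
    intro a b hab
    apply Subtype.ext
    have h := congrArg Subtype.val hab
    simp only [he_def, Prod.ext_iff] at h ⊢
    omega
  set S : SYT A → Finset (Fin A.card) := fun F => image (fun c => F.1 (e c)) univ with hS_def
  have hSmem : ∀ F c, F.1 (e c) ∈ S F := fun F c => mem_image_of_mem _ (mem_univ c)
  have hScard : ∀ F, (S F).card = B.card := fun F => by
    have hinj : Function.Injective (fun c => F.1 (e c)) := fun a b hab => he (F.2.1.1 hab)
    rw [hS_def]
    rw [card_image_of_injective _ hinj, card_univ, Fintype.card_coe]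
  set g : ∀ _ : SYT A, {c // c ∈ B.cells} → Fin B.card :=
    fun F c => ((S F).orderIsoOfFin (hScard F)).symm ⟨F.1 (e c), hSmem F c⟩ with hg_def
  have hgspec : ∀ F c, F.1 (e c) = (S F).orderEmbOfFin (hScard F) (g F c) := fun F c => by
    rw [hg_def, ← Finset.coe_orderIsoOfFin_apply, OrderIso.apply_symm_apply]
  have hginj : ∀ F, Function.Injective (g F) := by
    intro F x y hxy
    apply he
    apply F.2.1.1
    have h := congrArg ((S F).orderIsoOfFin (hScard F)) hxy
    simp only [hg_def, OrderIso.apply_symm_apply] at h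
    exact congrArg Subtype.val h
  have hgbij : ∀ F, Function.Bijective (g F) := fun F =>
    (Fintype.bijective_iff_injective_and_card (g F)).mpr
      ⟨hginj F, by simp [Fintype.card_coe]⟩
  have hgmono : ∀ F (a b : {c // c ∈ B.cells}), F.1 (e a) < F.1 (e b) → g F a < g F b := by
    intro F a b h
    rw [hg_def]
    exact ((S F).orderIsoOfFin (hScard F)).symm.strictMono (Subtype.mk_lt_mk.mpr h)
  have hgrow : ∀ F (a b : {c // c ∈ B.cells}), a.1.1 = b.1.1 → a.1.2 < b.1.2 →
      g F a < g F b := fun F a b h h2 =>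
    hgmono F a b (F.2.2.1 (e a) (e b) (by simp [he_def, h]) (by simpa [he_def] using h2))
  have hgcol : ∀ F (a b : {c // c ∈ B.cells}), a.1.2 = b.1.2 → a.1.1 < b.1.1 →
      g F a < g F b := fun F a b h h2 =>
    hgmono F a b (F.2.2.2 (e a) (e b) (by simpa [he_def] using h)
      (by simpa [he_def] using Nat.succ_lt_succ h2))
  have h0mem : ∀ k : Fin m, (((0 : ℕ), (k : ℕ)) : ℕ × ℕ) ∈ A.cells := fun k => by
    rw [YoungDiagram.mem_cells, h0]; exact k.2
  set r : SYT A → Fin m → Fin A.card := fun F k => F.1 ⟨(0, k), h0mem k⟩ with hr_def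
  have hrmono : ∀ F, StrictMono (r F) := fun F x y hxy =>
    F.2.2.1 _ _ rfl (by exact_mod_cast hxy)
  have hrcompl : ∀ F k, r F k ∈ (S F)ᶜ := by
    intro F k
    rw [mem_compl]
    intro hmem'
    rw [hS_def] at hmem'
    obtain ⟨c, -, hcc⟩ := mem_image.mp hmem'
    have h := F.2.1.1 hcc
    have h2 := congrArg (fun x => x.1.1) h
    simp [he_def, hr_def] at h2
  have hcomplcard : ∀ F, ((S F)ᶜ).card = m := fun F => by
    rw [card_compl, hScard, Fintype.card_fin, hc]; omega
  have hr_eq : ∀ F, r F = ((S F)ᶜ).orderEmbOfFin (hcomplcard F) := fun F =>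
    Finset.orderEmbOfFin_unique _ (hrcompl F) (hrmono F)
  set Φ : SYT A → {s : Finset (Fin A.card) // s.card = B.card} × SYT B :=
    fun F => (⟨S F, hScard F⟩, ⟨g F, hgbij F, hgrow F, hgcol F⟩) with hΦ_def
  have hΦinj : Function.Injective Φ := by
    intro F G hFG
    have hSeq : S F = S G := congrArg (fun x => x.1.1) hFG
    have hgeq : g F = g G := congrArg (fun x => x.2.1) hFG
    apply Subtype.ext
    funext c
    obtain ⟨⟨i, k⟩, hck⟩ := c
    cases i with
    | zero =>
      have hk : k < m := (h0 k).mp ((YoungDiagram.mem_cells _).mp hck)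
      have e1 := congrFun (hr_eq F) ⟨k, hk⟩
      have e2 := congrFun (hr_eq G) ⟨k, hk⟩
      rw [orderEmbOfFin_congr (by rw [hSeq]) (hcomplcard F) (hcomplcard G)] at e1
      exact e1.trans e2.symm
    | succ i =>
      have hB : ((i, k) : ℕ × ℕ) ∈ B.cells := by
        rw [YoungDiagram.mem_cells, ← h1]
        exact (YoungDiagram.mem_cells _).mp hck
      have h := hgspec F ⟨(i, k), hB⟩
      rw [orderEmbOfFin_congr hSeq (hScard F) (hScard G), hgeq, ← hgspec G ⟨(i, k), hB⟩] at h
      exact h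
  rw [sytCard_eq, sytCard_eq]
  calc Nat.card (SYT A) ≤ Nat.card ({s : Finset (Fin A.card) // s.card = B.card} × SYT B) :=
        Nat.card_le_card_of_injective Φ hΦinj
    _ = A.card.choose B.card * Nat.card (SYT B) := by
        rw [Nat.card_prod, Nat.card_eq_fintype_card, Fintype.card_finset_len, Fintype.card_fin]

/-- If `λ = (n−j, λ₂, λ₃, …)` is a partition of `n` and `μ = (λ₂, λ₃, …)` is the
partition of `j` obtained by removing the first row, then `d_λ ≤ C(n,j)·d_μ`. -/
theorem dim_le_choose_mul_dim (n j : ℕ) (hj : j ≤ n)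
    (μ : Nat.Partition j) (hμ : ∀ x ∈ μ.parts, x ≤ n - j)
    (lam : Nat.Partition n) (hlam : lam.parts = (n - j) ::ₘ μ.parts) :
    dPart lam ≤ n.choose j * dPart μ := by
  classical
  set m := n - j with hm
  set L := μ.parts.sort (· ≥ ·) with hL
  have hLmem : ∀ b ∈ L, b ≤ m := fun b hb =>
    hμ b (by rwa [← Multiset.mem_sort (· ≥ ·)])
  have hsorted : (m :: L).SortedGE := by
    apply List.Pairwise.sortedGE
    rw [List.pairwise_cons]
    exact ⟨fun b hb => hLmem b hb, Multiset.pairwise_sort _ _⟩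
  have hperm : lam.parts.sort (· ≥ ·) = m :: L := by
    refine List.Perm.eq_of_sortedGE (List.Pairwise.sortedGE (Multiset.pairwise_sort _ _)) hsorted ?_
    rw [← Multiset.coe_eq_coe, Multiset.sort_eq, hlam, ← Multiset.cons_coe, hL,
      Multiset.sort_eq]
  have hLsum : L.sum = j := by
    have : (↑L : Multiset ℕ).sum = j := by rw [hL, Multiset.sort_eq]; exact μ.parts_sum
    simpa using this
  have hA : lam.toYD = YoungDiagram.ofRowLens (m :: L) hsorted := by
    rw [Nat.Partition.toYD]
    exact ofRowLens_congr hperm _ _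
  have hB : μ.toYD = YoungDiagram.ofRowLens L (List.Pairwise.sortedGE (Multiset.pairwise_sort _ _)) := rfl
  have hAcard : lam.toYD.card = n := by
    rw [hA, card_ofRowLens, List.sum_cons, hLsum, hm]
    omega
  have hBcard : μ.toYD.card = j := by
    rw [hB, card_ofRowLens, hLsum]
  have h0 : ∀ k : ℕ, ((0 : ℕ), k) ∈ lam.toYD ↔ k < m := by
    intro k
    rw [hA, YoungDiagram.mem_ofRowLens]
    simp
  have h1 : ∀ i k : ℕ, ((i + 1 : ℕ), k) ∈ lam.toYD ↔ (i, k) ∈ μ.toYD := by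
    intro i k
    rw [hA, YoungDiagram.mem_ofRowLens, hB, YoungDiagram.mem_ofRowLens]
    simp [Nat.succ_lt_succ_iff]
  have key := syt_le_aux lam.toYD μ.toYD m h0 h1 (by rw [hAcard, hBcard]; omega)
  rwa [hAcard, hBcard] at key
end

section
/- Let λ = (λ₁ ≥ λ₂ ≥ …) be a partition of n ≥ 2 with conjugate partition λ', and suppose λ₁ ≥ n/2. Define r(λ) = (1/C(n,2)) · ∑_i (C(λ_i,2) − C(λ'_i,2)) and s_λ = 1/n + ((n−1)/n)·r(λ). Then s_λ ≤ 1 − 2(λ₁+1)(n−λ₁)/n². -/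
/-- The character ratio `r(λ) = (1/C(n,2)) ∑_i (C(λ_i,2) − C(λ'_i,2))` of a
partition `λ` of `n` (given as a Young diagram with `n` cells).  Here `λ_i` is the
length of row `i` and `λ'_i` the length of column `i`. -/
noncomputable def charRatio (n : ℕ) (μ : YoungDiagram) : ℝ :=
  ((n.choose 2 : ℝ))⁻¹ *
    ∑' i : ℕ, (((μ.rowLen i).choose 2 : ℝ) - ((μ.colLen i).choose 2 : ℝ))

/-- The modified character ratio `s_λ = 1/n + ((n−1)/n)·r(λ)`. -/
noncomputable def sMod (n : ℕ) (μ : YoungDiagram) : ℝ :=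
  1 / (n : ℝ) + ((n : ℝ) - 1) / (n : ℝ) * charRatio n μ

lemma choose_two_real (a : ℕ) : ((a.choose 2 : ℕ) : ℝ) = a * (a - 1) / 2 :=
  Nat.cast_choose_two (K := ℝ) a

/-- superadditivity of `choose 2` over a sum -/
lemma sum_choose_two_le (s : Finset ℕ) (f : ℕ → ℕ) :
    ∑ i ∈ s, (f i).choose 2 ≤ (∑ i ∈ s, f i).choose 2 := by
  induction s using Finset.cons_induction with
  | empty => simp
  | cons a s ha ih =>
      rw [Finset.sum_cons, Finset.sum_cons]
      calc (f a).choose 2 + ∑ i ∈ s, (f i).choose 2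
          ≤ (f a).choose 2 + (∑ i ∈ s, f i).choose 2 := by omega
        _ ≤ (f a + ∑ i ∈ s, f i).choose 2 := by
            have h : ∀ a b : ℕ, a.choose 2 + b.choose 2 ≤ (a + b).choose 2 := by
              intro a b
              have h0 : (0:ℚ) ≤ a := Nat.cast_nonneg a
              have h1 : (0:ℚ) ≤ b := Nat.cast_nonneg b
              have : ((a.choose 2 + b.choose 2 : ℕ) : ℚ) ≤ (((a+b).choose 2 : ℕ) : ℚ) := by
                push_cast [Nat.cast_choose_two]
                nlinarith
              exact_mod_cast this
            exact h _ _

lemma sub_one_le_choose_two (c : ℕ) : c - 1 ≤ c.choose 2 := by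
  match c with
  | 0 => simp
  | 1 => simp
  | (c+2) =>
      have : (c+2).choose 2 = (c+1).choose 1 + (c+1).choose 2 := by rw [Nat.choose_succ_succ]
      rw [this, Nat.choose_one_right]
      omega

lemma card_eq_sum_rowLen (μ : YoungDiagram) (N : ℕ) (hN : ∀ i, N ≤ i → μ.rowLen i = 0) :
    μ.card = ∑ i ∈ Finset.range N, μ.rowLen i := by
  have h := Finset.card_eq_sum_card_fiberwise (f := Prod.fst) (s := μ.cells)
    (t := Finset.range N) ?_
  · rw [YoungDiagram.card, h]
    refine Finset.sum_congr rfl fun i _ => ?_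
    rw [YoungDiagram.rowLen_eq_card]
    rfl
  · intro c hc
    rw [Finset.mem_coe, Finset.mem_range]
    by_contra hcon
    have h0 : μ.rowLen c.1 = 0 := hN c.1 (le_of_not_gt hcon)
    have : c ∈ μ := hc
    rw [show c = (c.1, c.2) from rfl, YoungDiagram.mem_iff_lt_rowLen, h0] at this
    omega

lemma card_transpose' (μ : YoungDiagram) : μ.transpose.card = μ.card := by
  simp [YoungDiagram.card, YoungDiagram.transpose]

/-- For a partition `λ` of `n ≥ 2` with `λ₁ ≥ n/2`, one has
`s_λ ≤ 1 − 2(λ₁+1)(n−λ₁)/n²`. -/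
theorem sMod_le_of_large_first_row (n : ℕ) (hn : 2 ≤ n)
    (μ : YoungDiagram) (hμ : μ.card = n) (h1 : (n : ℝ) / 2 ≤ (μ.rowLen 0 : ℝ)) :
    sMod n μ ≤ 1 - 2 * ((μ.rowLen 0 : ℝ) + 1) * ((n : ℝ) - (μ.rowLen 0 : ℝ)) / (n : ℝ) ^ 2 := by
  set k := μ.rowLen 0 with hk_def
  -- row lengths vanish from index n on
  have hrow0 : ∀ i, μ.colLen 0 ≤ i → μ.rowLen i = 0 := by
    intro i hi
    by_contra h
    have h2 : (i, 0) ∈ μ := YoungDiagram.mem_iff_lt_rowLen.2 (Nat.pos_of_ne_zero h)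
    have := YoungDiagram.mem_iff_lt_colLen.1 h2
    omega
  have hcol0 : ∀ j, k ≤ j → μ.colLen j = 0 := by
    intro j hj
    by_contra h
    have h2 : (0, j) ∈ μ := YoungDiagram.mem_iff_lt_colLen.2 (Nat.pos_of_ne_zero h)
    have := YoungDiagram.mem_iff_lt_rowLen.1 h2
    omega
  have hkn : k ≤ n := by
    rw [hk_def, YoungDiagram.rowLen_eq_card, ← hμ]
    exact Finset.card_filter_le _ _
  have hcoln : μ.colLen 0 ≤ n := by
    rw [YoungDiagram.colLen_eq_card, ← hμ]
    exact Finset.card_filter_le _ _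
  have hrow : ∀ i, n ≤ i → μ.rowLen i = 0 := fun i hi => hrow0 i (le_trans hcoln hi)
  have hcol : ∀ j, n ≤ j → μ.colLen j = 0 := fun j hj => hcol0 j (le_trans hkn hj)
  -- sums of row and column lengths equal n
  have hsum_row : ∑ i ∈ Finset.range n, μ.rowLen i = n := by
    rw [← card_eq_sum_rowLen μ n hrow, hμ]
  have hsum_col : ∑ j ∈ Finset.range n, μ.colLen j = n := by
    have h := card_eq_sum_rowLen μ.transpose n (by
      intro i hi; rw [YoungDiagram.rowLen_transpose]; exact hcol i hi)
    rw [card_transpose', hμ] at h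
    rw [show (∑ j ∈ Finset.range n, μ.colLen j)
        = ∑ j ∈ Finset.range n, μ.transpose.rowLen j from
      Finset.sum_congr rfl fun i _ => (YoungDiagram.rowLen_transpose μ i).symm, ← h]
  -- m = sum of rows below the first
  set m : ℕ := ∑ i ∈ Finset.range (n-1), μ.rowLen (i+1) with hm_def
  have hkm : k + m = n := by
    have h := Finset.sum_range_succ' (fun i => μ.rowLen i) (n-1)
    rw [show n - 1 + 1 = n by omega, hsum_row] at h
    omega
  -- bound on the row part
  have hS1 : ∑ i ∈ Finset.range n, (μ.rowLen i).choose 2 ≤ k.choose 2 + m.choose 2 := by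
    have h := Finset.sum_range_succ' (fun i => (μ.rowLen i).choose 2) (n-1)
    rw [show n - 1 + 1 = n by omega] at h
    rw [h]
    rw [show μ.rowLen 0 = k from hk_def.symm]
    have h2 := sum_choose_two_le (Finset.range (n-1)) (fun i => μ.rowLen (i+1))
    rw [← hm_def] at h2
    omega
  -- bound on the column part
  have hS2 : m ≤ ∑ j ∈ Finset.range n, (μ.colLen j).choose 2 := by
    have hsub : ∑ j ∈ Finset.range k, μ.colLen j = n := by
      rw [← hsum_col]
      exact Finset.sum_subset (Finset.range_subset_range.2 hkn)
        (fun j _ hj => hcol0 j (by simpa using hj))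
    have h1' : ∑ j ∈ Finset.range k, (μ.colLen j).choose 2
        ≤ ∑ j ∈ Finset.range n, (μ.colLen j).choose 2 :=
      Finset.sum_le_sum_of_subset (Finset.range_subset_range.2 hkn)
    have h2' : ∑ j ∈ Finset.range k, (μ.colLen j - 1)
        ≤ ∑ j ∈ Finset.range k, (μ.colLen j).choose 2 :=
      Finset.sum_le_sum fun j _ => sub_one_le_choose_two _
    have h3' : ∑ j ∈ Finset.range k, μ.colLen j
        ≤ (∑ j ∈ Finset.range k, (μ.colLen j - 1)) + k := by
      calc ∑ j ∈ Finset.range k, μ.colLen j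
          ≤ ∑ j ∈ Finset.range k, ((μ.colLen j - 1) + 1) :=
            Finset.sum_le_sum fun j _ => by omega
        _ = (∑ j ∈ Finset.range k, (μ.colLen j - 1)) + k := by
            rw [Finset.sum_add_distrib]; simp
    omega
  -- move to the reals
  have htsum : (∑' i : ℕ, (((μ.rowLen i).choose 2 : ℝ) - ((μ.colLen i).choose 2 : ℝ)))
      = ∑ i ∈ Finset.range n, (((μ.rowLen i).choose 2 : ℝ) - ((μ.colLen i).choose 2 : ℝ)) := by
    refine tsum_eq_sum fun i hi => ?_
    have hi' : n ≤ i := by simpa using hi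
    rw [hrow i hi', hcol i hi']
    simp
  set S1 : ℝ := ∑ i ∈ Finset.range n, (((μ.rowLen i).choose 2 : ℕ) : ℝ) with hS1_def
  set S2 : ℝ := ∑ i ∈ Finset.range n, (((μ.colLen i).choose 2 : ℕ) : ℝ) with hS2_def
  have hsplit : (∑ i ∈ Finset.range n, (((μ.rowLen i).choose 2 : ℝ)
      - ((μ.colLen i).choose 2 : ℝ))) = S1 - S2 := Finset.sum_sub_distrib _ _
  have hnR : (2:ℝ) ≤ n := by exact_mod_cast hn
  have hnpos : (0:ℝ) < n := by linarith
  have hmR : (m:ℝ) = (n:ℝ) - (k:ℝ) := by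
    have h : (k:ℝ) + m = n := by exact_mod_cast hkm
    linarith
  have hS1R : S1 ≤ (k:ℝ)*((k:ℝ)-1)/2 + (m:ℝ)*((m:ℝ)-1)/2 := by
    have h : S1 ≤ ((k.choose 2 + m.choose 2 : ℕ) : ℝ) := by
      rw [hS1_def, ← Nat.cast_sum]
      exact_mod_cast Nat.cast_le.2 hS1
    rw [Nat.cast_add, choose_two_real, choose_two_real] at h
    exact h
  have hS2R : (m:ℝ) ≤ S2 := by
    rw [hS2_def, ← Nat.cast_sum]
    exact_mod_cast Nat.cast_le.2 hS2
  have hchoose_n : ((n.choose 2 : ℕ) : ℝ) = (n:ℝ)*((n:ℝ)-1)/2 := choose_two_real n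
  -- the key inequality
  have key : S1 - S2 ≤ (n:ℝ)*((n:ℝ)-1)/2 - ((k:ℝ)+1)*(m:ℝ) := by nlinarith [hmR]
  -- finish
  rw [sMod, charRatio, htsum, hsplit, hchoose_n, ← hmR]
  have hn2pos : (0:ℝ) < (n:ℝ)^2 := by positivity
  have hne1 : ((n:ℝ)-1) ≠ 0 := by linarith
  have hne0 : (n:ℝ) ≠ 0 := by linarith
  have hcoef : ((n:ℝ)-1)/(n:ℝ) * (((n:ℝ)*((n:ℝ)-1)/2)⁻¹ * (S1 - S2))
      = 2/(n:ℝ)^2 * (S1 - S2) := by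
    rw [show (2:ℝ)/(n:ℝ)^2 = ((n:ℝ)-1)/(n:ℝ) * ((n:ℝ)*((n:ℝ)-1)/2)⁻¹ by
      field_simp]
    ring
  rw [hcoef]
  have hmain : (n:ℝ) + 2*(S1 - S2) ≤ (n:ℝ)^2 - 2*((k:ℝ)+1)*(m:ℝ) := by nlinarith [key]
  have heq1 : 1/(n:ℝ) + 2/(n:ℝ)^2 * (S1 - S2) = ((n:ℝ) + 2*(S1-S2))/(n:ℝ)^2 := by
    field_simp
  have heq2 : 1 - 2 * ((k:ℝ)+1) * (m:ℝ) / (n:ℝ)^2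
      = ((n:ℝ)^2 - 2*((k:ℝ)+1)*(m:ℝ))/(n:ℝ)^2 := by
    field_simp
  rw [heq1, heq2]
  gcongr
end

section
/- Let q, m, n ≥ 1 and for σ ∈ S_n let N_q(σ) denote the number of q-cycles in the disjoint-cycle decomposition of σ. Then the number of permutations σ ∈ S_n with N_q(σ) = m is at most n! / (q^m · m!); equivalently, for σ chosen uniformly at random in S_n, ℙ(N_q(σ) = m) ≤ 1/(q^m m!). -/
open Finset
open scoped Classical

/-- The number `N_q(σ)` of `q`-cycles in the disjoint-cycle decomposition of the
permutation `σ`: the number of points whose orbit under `σ` has size exactly `q`,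
divided by `q` (fixed points are cycles of length `1`). -/
noncomputable def cycleCount {n : ℕ} (σ : Equiv.Perm (Fin n)) (q : ℕ) : ℕ :=
  (univ.filter fun x => Function.minimalPeriod (⇑σ) x = q).card / q

namespace CPQ

variable {n q m : ℕ}

noncomputable def Pset (σ : Equiv.Perm (Fin n)) (q : ℕ) : Finset (Fin n) :=
  univ.filter fun x => Function.minimalPeriod (⇑σ) x = q

lemma mem_Pset {σ : Equiv.Perm (Fin n)} {x : Fin n} :
    x ∈ Pset σ q ↔ Function.minimalPeriod (⇑σ) x = q := by simp [Pset]

section PerX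

variable {σ : Equiv.Perm (Fin n)} {x y : Fin n}

lemma pow_q_fixed (hper : Function.minimalPeriod (⇑σ) x = q) : (σ ^ q) x = x := by
  have := Function.iterate_minimalPeriod (f := ⇑σ) (x := x)
  rwa [hper, Equiv.Perm.iterate_eq_pow] at this

lemma pow_mod_apply (hper : Function.minimalPeriod (⇑σ) x = q) (a : ℕ) :
    (σ ^ a) x = (σ ^ (a % q)) x := by
  have h := (Function.isPeriodicPt_minimalPeriod (⇑σ) x).iterate_mod_apply a
  rw [hper] at h
  simpa [Equiv.Perm.iterate_eq_pow] using h.symm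

lemma pow_inj (hper : Function.minimalPeriod (⇑σ) x = q) {a b : ℕ}
    (ha : a < q) (hb : b < q) (h : (σ ^ a) x = (σ ^ b) x) : a = b := by
  have h2 := Function.iterate_injOn_Iio_minimalPeriod (f := ⇑σ) (x := x)
  rw [hper] at h2
  exact h2 ha hb (by simpa [Equiv.Perm.iterate_eq_pow] using h)

lemma period_pow (hq : 0 < q) (hper : Function.minimalPeriod (⇑σ) x = q) (a : ℕ) :
    Function.minimalPeriod (⇑σ) ((σ ^ a) x) = q := by
  have hx : x ∈ Function.periodicPts (⇑σ) :=
    Function.minimalPeriod_pos_iff_mem_periodicPts.mp (by omega)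
  have h := Function.minimalPeriod_apply_iterate hx a
  rw [hper] at h
  simpa [Equiv.Perm.iterate_eq_pow] using h

end PerX

noncomputable def orb (σ : Equiv.Perm (Fin n)) (q : ℕ) (x : Fin n) : Finset (Fin n) :=
  (range q).image fun j => (σ ^ j) x

section Orb

variable {σ : Equiv.Perm (Fin n)} {x y : Fin n}

lemma mem_orb : y ∈ orb σ q x ↔ ∃ j < q, (σ ^ j) x = y := by simp [orb]

lemma self_mem_orb (hq : 0 < q) : x ∈ orb σ q x :=
  mem_orb.mpr ⟨0, hq, by simp⟩

lemma pow_mem_orb (hq : 0 < q) (hper : Function.minimalPeriod (⇑σ) x = q) (a : ℕ) :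
    (σ ^ a) x ∈ orb σ q x :=
  mem_orb.mpr ⟨a % q, Nat.mod_lt _ hq, (pow_mod_apply hper a).symm⟩

lemma orb_card (hper : Function.minimalPeriod (⇑σ) x = q) : (orb σ q x).card = q := by
  rw [orb, Finset.card_image_of_injOn, card_range]
  intro a ha b hb h
  exact pow_inj hper (by simpa using ha) (by simpa using hb) h

lemma period_of_mem_orb (hq : 0 < q) (hper : Function.minimalPeriod (⇑σ) x = q)
    (hy : y ∈ orb σ q x) : Function.minimalPeriod (⇑σ) y = q := by
  obtain ⟨j, _, rfl⟩ := mem_orb.mp hy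
  exact period_pow hq hper j

lemma orb_eq_of_mem (hq : 0 < q) (hper : Function.minimalPeriod (⇑σ) x = q)
    (hy : y ∈ orb σ q x) : orb σ q y = orb σ q x := by
  obtain ⟨j, hj, rfl⟩ := mem_orb.mp hy
  ext z
  simp only [mem_orb]
  constructor
  · rintro ⟨k, hk, rfl⟩
    refine ⟨(k + j) % q, Nat.mod_lt _ hq, ?_⟩
    rw [← pow_mod_apply hper, pow_add, Equiv.Perm.mul_apply]
  · rintro ⟨a, ha, rfl⟩
    have hx : x = (σ ^ (q - j)) ((σ ^ j) x) := by
      rw [← Equiv.Perm.mul_apply, ← pow_add, Nat.sub_add_cancel hj.le, pow_q_fixed hper]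
    refine ⟨(a + (q - j)) % q, Nat.mod_lt _ hq, ?_⟩
    rw [← pow_mod_apply (period_pow hq hper j), pow_add, Equiv.Perm.mul_apply, ← hx]

end Orb


noncomputable def rep (σ : Equiv.Perm (Fin n)) (q : ℕ) (x : Fin n) : Fin n :=
  if h : (orb σ q x).Nonempty then (orb σ q x).min' h else x

section Rep
variable {σ : Equiv.Perm (Fin n)} {x y : Fin n}

lemma orb_nonempty (hq : 0 < q) : (orb σ q x).Nonempty := ⟨x, self_mem_orb hq⟩

lemma rep_mem (hq : 0 < q) : rep σ q x ∈ orb σ q x := by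
  rw [rep, dif_pos (orb_nonempty hq)]
  exact Finset.min'_mem _ _

lemma rep_congr (hq : 0 < q) (hper : Function.minimalPeriod (⇑σ) x = q)
    (hy : y ∈ orb σ q x) : rep σ q y = rep σ q x := by
  have h2 : orb σ q y = orb σ q x := orb_eq_of_mem hq hper hy
  rw [rep, rep, dif_pos (orb_nonempty hq), dif_pos (orb_nonempty hq)]
  congr 1

lemma period_rep (hq : 0 < q) (hper : Function.minimalPeriod (⇑σ) x = q) :
    Function.minimalPeriod (⇑σ) (rep σ q x) = q :=
  period_of_mem_orb hq hper (rep_mem hq)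

end Rep

noncomputable def Rset (σ : Equiv.Perm (Fin n)) (q : ℕ) : Finset (Fin n) :=
  (Pset σ q).image (rep σ q)

section RsetL
variable {σ : Equiv.Perm (Fin n)} {ρ x : Fin n}

lemma Rset_subset_Pset (hq : 0 < q) (hρ : ρ ∈ Rset σ q) : ρ ∈ Pset σ q := by
  obtain ⟨x, hx, rfl⟩ := Finset.mem_image.mp hρ
  exact mem_Pset.mpr (period_rep hq (mem_Pset.mp hx))

lemma rep_eq_self_of_mem_Rset (hq : 0 < q) (hρ : ρ ∈ Rset σ q) : rep σ q ρ = ρ := by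
  obtain ⟨x, hx, rfl⟩ := Finset.mem_image.mp hρ
  exact rep_congr hq (mem_Pset.mp hx) (rep_mem hq)

lemma rep_mem_Rset (hq : 0 < q) (hx : x ∈ Pset σ q) : rep σ q x ∈ Rset σ q :=
  Finset.mem_image_of_mem _ hx

lemma card_Pset_eq (hq : 0 < q) : (Pset σ q).card = q * (Rset σ q).card := by
  rw [Finset.card_eq_sum_card_fiberwise (f := rep σ q) (t := Rset σ q)
    (fun x hx => rep_mem_Rset hq hx)]
  have key : ∀ ρ ∈ Rset σ q, ((Pset σ q).filter fun x => rep σ q x = ρ).card = q := by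
    intro ρ hρ
    have hρP : Function.minimalPeriod (⇑σ) ρ = q := mem_Pset.mp (Rset_subset_Pset hq hρ)
    have hset : ((Pset σ q).filter fun x => rep σ q x = ρ) = orb σ q ρ := by
      ext y
      simp only [Finset.mem_filter, mem_Pset]
      constructor
      · rintro ⟨hyP, rfl⟩
        have h1 : rep σ q y ∈ orb σ q y := rep_mem hq
        rw [orb_eq_of_mem hq hyP h1]
        exact self_mem_orb hq
      · intro hy
        exact ⟨period_of_mem_orb hq hρP hy,
          (rep_congr hq hρP hy).trans (rep_eq_self_of_mem_Rset hq hρ)⟩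
    rw [hset, orb_card hρP]
  rw [Finset.sum_congr rfl key, Finset.sum_const, smul_eq_mul, mul_comm]

lemma card_facts (hq : 0 < q) (hσ : cycleCount σ q = m) :
    (Pset σ q).card = q * m ∧ (Rset σ q).card = m := by
  have h1 := card_Pset_eq (σ := σ) hq
  have h2 : (Pset σ q).card / q = m := hσ
  have : (Rset σ q).card = m := by
    rw [h1, Nat.mul_div_cancel_left _ hq] at h2; exact h2
  exact ⟨by rw [h1, this], this⟩

end RsetL
lemma enum_mem {s : Finset (Fin n)} {k : ℕ} (hk : k < s.card) (d : Fin n) :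
    (s.sort (· ≤ ·)).getD k d ∈ s := by
  have hl : k < (s.sort (· ≤ ·)).length := by rwa [Finset.length_sort]
  rw [List.getD_eq_getElem _ _ hl]
  exact (Finset.mem_sort _).mp (List.getElem_mem hl)

lemma enum_inj {s : Finset (Fin n)} {k l : ℕ} (hk : k < s.card) (hl : l < s.card) (d : Fin n)
    (h : (s.sort (· ≤ ·)).getD k d = (s.sort (· ≤ ·)).getD l d) : k = l := by
  have hk' : k < (s.sort (· ≤ ·)).length := by rwa [Finset.length_sort]
  have hl' : l < (s.sort (· ≤ ·)).length := by rwa [Finset.length_sort]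
  rw [List.getD_eq_getElem _ _ hk', List.getD_eq_getElem _ _ hl'] at h
  exact ((Finset.sort_nodup _ _).getElem_inj_iff).mp h

lemma enum_surj {s : Finset (Fin n)} {y : Fin n} (hy : y ∈ s) (d : Fin n) :
    ∃ k < s.card, (s.sort (· ≤ ·)).getD k d = y := by
  have : y ∈ s.sort (· ≤ ·) := (Finset.mem_sort _).mpr hy
  obtain ⟨k, hk, hv⟩ := List.mem_iff_getElem.mp this
  refine ⟨k, by rwa [Finset.length_sort] at hk, ?_⟩
  rw [List.getD_eq_getElem _ _ hk, hv]

lemma mem_periodicPts_perm (σ : Equiv.Perm (Fin n)) (x : Fin n) :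
    x ∈ Function.periodicPts ⇑σ := by
  refine Function.mk_mem_periodicPts (orderOf_pos σ) ?_
  show Function.IsPeriodicPt _ _ _
  rw [Function.IsPeriodicPt, Function.IsFixedPt, Equiv.Perm.iterate_eq_pow, pow_orderOf_eq_one]
  rfl

lemma period_apply (σ : Equiv.Perm (Fin n)) (x : Fin n) :
    Function.minimalPeriod ⇑σ (σ x) = Function.minimalPeriod ⇑σ x :=
  Function.minimalPeriod_apply (mem_periodicPts_perm σ x)


noncomputable def repE (d : Fin n) (σ : Equiv.Perm (Fin n)) (q : ℕ) (k : ℕ) : Fin n :=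
  ((Rset σ q).sort (· ≤ ·)).getD k d
noncomputable def compE (d : Fin n) (σ : Equiv.Perm (Fin n)) (q : ℕ) (k : ℕ) : Fin n :=
  ((univ \ Pset σ q).sort (· ≤ ·)).getD k d

noncomputable def tFun (d : Fin n) (q m : ℕ) (σ : Equiv.Perm (Fin n))
    (π : Equiv.Perm (Fin m)) (r : Fin m → Fin q) (k : Fin n) : Fin n :=
  if h : (k : ℕ) < q * m then
    (σ ^ (((r ⟨(k : ℕ) / q, Nat.div_lt_of_lt_mul h⟩ : Fin q) : ℕ) + (k : ℕ) % q))
      (repE d σ q ((π ⟨(k : ℕ) / q, Nat.div_lt_of_lt_mul h⟩ : Fin m) : ℕ))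
  else σ (compE d σ q ((k : ℕ) - q * m))
section T
variable {q m : ℕ} {d : Fin n} {σ : Equiv.Perm (Fin n)} {π : Equiv.Perm (Fin m)} {r : Fin m → Fin q}

lemma repE_mem (hq : 0 < q) (hR : (Rset σ q).card = m) {k : ℕ} (hk : k < m) :
    repE d σ q k ∈ Rset σ q := enum_mem (by omega) d

lemma repE_per (hq : 0 < q) (hR : (Rset σ q).card = m) {k : ℕ} (hk : k < m) :
    Function.minimalPeriod (⇑σ) (repE d σ q k) = q :=
  mem_Pset.mp (Rset_subset_Pset hq (repE_mem hq hR hk))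

lemma repE_inj (hR : (Rset σ q).card = m) {k l : ℕ} (hk : k < m) (hl : l < m)
    (h : repE d σ q k = repE d σ q l) : k = l := enum_inj (by omega) (by omega) d h

lemma tFun_block (hq : 0 < q) {i j : ℕ} (hi : i < m) (hj : j < q) (hk : q * i + j < n) :
    tFun d q m σ π r ⟨q * i + j, hk⟩ =
      (σ ^ ((r ⟨i, hi⟩ : ℕ) + j)) (repE d σ q ((π ⟨i, hi⟩ : Fin m) : ℕ)) := by
  have hlt : q * i + j < q * m := by
    have h2 := Nat.mul_le_mul_left q (Nat.succ_le_of_lt hi)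
    rw [Nat.mul_succ] at h2; omega
  have h1 : (q * i + j) / q = i := by
    rw [Nat.mul_add_div hq, Nat.div_eq_of_lt hj, Nat.add_zero]
  have h2 : (q * i + j) % q = j := by
    rw [Nat.mul_add_mod]; exact Nat.mod_eq_of_lt hj
  rw [tFun, dif_pos hlt]
  simp only [h1, h2]

lemma tFun_tail {k : ℕ} (hk1 : q * m ≤ k) (hk2 : k < n) :
    tFun d q m σ π r ⟨k, hk2⟩ = σ (compE d σ q (k - q * m)) := by
  rw [tFun, dif_neg (not_lt.mpr hk1)]

lemma tFun_head_mem (hq : 0 < q) (hR : (Rset σ q).card = m) {k : Fin n}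
    (h : (k : ℕ) < q * m) : tFun d q m σ π r k ∈ Pset σ q := by
  rw [tFun, dif_pos h]
  exact mem_Pset.mpr (period_pow hq (repE_per hq hR (π ⟨(k : ℕ) / q, Nat.div_lt_of_lt_mul h⟩).isLt) _)

lemma tFun_tail_notMem (hP : (Pset σ q).card = q * m) {k : Fin n}
    (h : q * m ≤ (k : ℕ)) : tFun d q m σ π r k ∉ Pset σ q := by
  rw [tFun, dif_neg (by omega)]
  have hcc : (univ \ Pset σ q).card = n - q * m := by
    rw [card_sdiff_of_subset (subset_univ _), card_univ, Fintype.card_fin, hP]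
  have hkn : (k : ℕ) - q * m < (univ \ Pset σ q).card := by
    rw [hcc]; have := k.isLt; omega
  have hc := enum_mem hkn d
  rw [mem_sdiff] at hc
  intro hmem
  rw [mem_Pset, period_apply] at hmem
  exact hc.2 (mem_Pset.mpr hmem)
end T
section D
variable {q m : ℕ} {d : Fin n} {σ : Equiv.Perm (Fin n)} {π : Equiv.Perm (Fin m)} {r : Fin m → Fin q}

lemma tFun_inj (hq : 0 < q) (hP : (Pset σ q).card = q * m) (hR : (Rset σ q).card = m) :
    Function.Injective (tFun d q m σ π r) := by
  intro k k' heq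
  by_cases h : (k : ℕ) < q * m
  · by_cases h' : (k' : ℕ) < q * m
    · set i : Fin m := ⟨(k : ℕ) / q, Nat.div_lt_of_lt_mul h⟩ with hi_def
      set i' : Fin m := ⟨(k' : ℕ) / q, Nat.div_lt_of_lt_mul h'⟩ with hi'_def
      have e : tFun d q m σ π r k = (σ ^ ((r i : ℕ) + (k : ℕ) % q)) (repE d σ q (π i)) := by
        rw [tFun, dif_pos h]
      have e' : tFun d q m σ π r k' = (σ ^ ((r i' : ℕ) + (k' : ℕ) % q)) (repE d σ q (π i')) := by
        rw [tFun, dif_pos h']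
      rw [e, e'] at heq
      have hperρ : Function.minimalPeriod (⇑σ) (repE d σ q (π i)) = q :=
        repE_per hq hR (π i).isLt
      have hperρ' : Function.minimalPeriod (⇑σ) (repE d σ q (π i')) = q :=
        repE_per hq hR (π i').isLt
      have h1 : orb σ q (repE d σ q (π i)) = orb σ q (repE d σ q (π i')) := by
        calc orb σ q (repE d σ q (π i))
            = orb σ q ((σ ^ ((r i : ℕ) + (k : ℕ) % q)) (repE d σ q (π i))) :=
              (orb_eq_of_mem hq hperρ (pow_mem_orb hq hperρ _)).symm
          _ = orb σ q ((σ ^ ((r i' : ℕ) + (k' : ℕ) % q)) (repE d σ q (π i'))) := by rw [heq]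
          _ = orb σ q (repE d σ q (π i')) :=
              orb_eq_of_mem hq hperρ' (pow_mem_orb hq hperρ' _)
      have h2 : repE d σ q (π i) = repE d σ q (π i') := by
        have hmem : repE d σ q (π i') ∈ orb σ q (repE d σ q (π i)) := by
          rw [h1]; exact self_mem_orb hq
        have h3 := rep_congr hq hperρ hmem
        rw [rep_eq_self_of_mem_Rset hq (repE_mem hq hR (π i').isLt),
            rep_eq_self_of_mem_Rset hq (repE_mem hq hR (π i).isLt)] at h3
        exact h3.symm
      have h3 : i = i' := π.injective (Fin.ext (repE_inj hR (π i).isLt (π i').isLt h2))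
      rw [← h3] at heq
      have h4 : ((r i : ℕ) + (k : ℕ) % q) % q = ((r i : ℕ) + (k' : ℕ) % q) % q :=
        pow_inj hperρ (Nat.mod_lt _ hq) (Nat.mod_lt _ hq)
          (by rw [← pow_mod_apply hperρ, ← pow_mod_apply hperρ]; exact heq)
      have h5 : (k : ℕ) % q = (k' : ℕ) % q := by
        have h6 := Nat.ModEq.add_left_cancel' (r i : ℕ) h4
        rwa [Nat.ModEq, Nat.mod_eq_of_lt (Nat.mod_lt _ hq),
          Nat.mod_eq_of_lt (Nat.mod_lt _ hq)] at h6
      have d1 : (k : ℕ) / q = (k' : ℕ) / q := congrArg Fin.val h3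
      have e1 := Nat.div_add_mod (k : ℕ) q
      have e2 := Nat.div_add_mod (k' : ℕ) q
      exact Fin.ext (by rw [← e1, ← e2, d1, h5])
    · exact absurd (heq ▸ tFun_head_mem hq hR h)
        (tFun_tail_notMem hP (le_of_not_gt h'))
  · by_cases h' : (k' : ℕ) < q * m
    · exact absurd (heq.symm ▸ tFun_head_mem hq hR h')
        (tFun_tail_notMem hP (le_of_not_gt h))
    · have e : tFun d q m σ π r k = σ (compE d σ q ((k : ℕ) - q * m)) := by
        rw [tFun, dif_neg h]
      have e' : tFun d q m σ π r k' = σ (compE d σ q ((k' : ℕ) - q * m)) := by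
        rw [tFun, dif_neg h']
      rw [e, e'] at heq
      have h2 := σ.injective heq
      have hcc : (univ \ Pset σ q).card = n - q * m := by
        rw [card_sdiff_of_subset (subset_univ _), card_univ, Fintype.card_fin, hP]
      have hk := k.isLt
      have hk' := k'.isLt
      have h3 := enum_inj (s := univ \ Pset σ q) (k := (k : ℕ) - q * m)
        (l := (k' : ℕ) - q * m) (by omega) (by omega) d h2
      exact Fin.ext (by omega)

lemma tFun_bij (hq : 0 < q) (hP : (Pset σ q).card = q * m) (hR : (Rset σ q).card = m) :
    Function.Bijective (tFun d q m σ π r) :=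
  Finite.injective_iff_bijective.mp (tFun_inj hq hP hR)

lemma exists_head (hq : 0 < q) (hP : (Pset σ q).card = q * m) (hR : (Rset σ q).card = m)
    {y : Fin n} (hy : y ∈ Pset σ q) :
    ∃ k : Fin n, (k : ℕ) < q * m ∧ tFun d q m σ π r k = y := by
  obtain ⟨k, hk⟩ := (tFun_bij (π := π) (r := r) (d := d) hq hP hR).2 y
  by_cases h : (k : ℕ) < q * m
  · exact ⟨k, h, hk⟩
  · exact absurd (hk ▸ tFun_tail_notMem hP (le_of_not_gt h)) (fun hh => hh hy)
end D
section E
variable {q m : ℕ}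

lemma repE_congr {d : Fin n} {σ σ' : Equiv.Perm (Fin n)} (h : Rset σ q = Rset σ' q) :
    repE d σ q = repE d σ' q := by
  funext k; rw [repE, repE, h]

lemma block_sub {d : Fin n} {σ σ' : Equiv.Perm (Fin n)} {π π' : Equiv.Perm (Fin m)}
    {r r' : Fin m → Fin q} (hq : 0 < q)
    (hR : (Rset σ q).card = m) (hR' : (Rset σ' q).card = m) (hqm : q * m ≤ n)
    (heq : tFun d q m σ π r = tFun d q m σ' π' r') (i : Fin m) :
    orb σ q (repE d σ q (π i)) ⊆ orb σ' q (repE d σ' q (π' i)) := by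
  intro z hz
  obtain ⟨a, ha, rfl⟩ := mem_orb.mp hz
  have hperρ : Function.minimalPeriod (⇑σ) (repE d σ q (π i)) = q := repE_per hq hR (π i).isLt
  have hperρ' : Function.minimalPeriod (⇑σ') (repE d σ' q (π' i)) = q :=
    repE_per hq hR' (π' i).isLt
  set c := ((r i : ℕ)) with hc_def
  have hc : c < q := (r i).isLt
  set j := (a + q - c) % q with hj_def
  have hj : j < q := Nat.mod_lt _ hq
  have hk : q * (i : ℕ) + j < n := by
    have h2 := Nat.mul_le_mul_left q (Nat.succ_le_of_lt i.isLt)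
    rw [Nat.mul_succ] at h2; omega
  have hb := tFun_block (d := d) (σ := σ) (π := π) (r := r) hq i.isLt hj hk
  have hb' := tFun_block (d := d) (σ := σ') (π := π') (r := r') hq i.isLt hj hk
  simp only [Fin.eta] at hb hb'
  have h7 : (c + j) % q = a % q := by
    calc c + j ≡ c + (a + q - c) [MOD q] := Nat.ModEq.add_left _ (Nat.mod_modEq _ _)
      _ = a + q := by omega
      _ ≡ a [MOD q] := by unfold Nat.ModEq; rw [Nat.add_mod_right]
  have hexp : (σ ^ (c + j)) (repE d σ q (π i)) = (σ ^ a) (repE d σ q (π i)) := by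
    rw [pow_mod_apply hperρ, h7, ← pow_mod_apply hperρ]
  have hchain : (σ ^ a) (repE d σ q (π i)) =
      (σ' ^ ((r' i : ℕ) + j)) (repE d σ' q (π' i)) := by
    rw [← hexp, ← hb, ← hb', heq]
  rw [hchain]
  exact pow_mem_orb hq hperρ' _

lemma encode_inj (hq : 0 < q) {d : Fin n}
    {σ σ' : Equiv.Perm (Fin n)} {π π' : Equiv.Perm (Fin m)} {r r' : Fin m → Fin q}
    (hσ : cycleCount σ q = m) (hσ' : cycleCount σ' q = m)
    (heq : tFun d q m σ π r = tFun d q m σ' π' r') :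
    σ = σ' ∧ π = π' ∧ r = r' := by
  obtain ⟨hP, hR⟩ := card_facts hq hσ
  obtain ⟨hP', hR'⟩ := card_facts hq hσ'
  have hqm : q * m ≤ n := by
    have h0 := card_le_univ (Pset σ q)
    rwa [hP, Fintype.card_fin] at h0
  have hbl : ∀ i j : ℕ, i < m → j < q → q * i + j < n := by
    intro i j hi hj
    have h2 := Nat.mul_le_mul_left q (Nat.succ_le_of_lt hi)
    rw [Nat.mul_succ] at h2; omega
  have hteq : ∀ l : Fin n, tFun d q m σ π r l = tFun d q m σ' π' r' l :=
    fun l => congrFun heq l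
  -- Pset equal
  have hPeq : Pset σ q = Pset σ' q := by
    ext y
    constructor
    · intro hy
      obtain ⟨k, hk, hv⟩ := exists_head (π := π) (r := r) (d := d) hq hP hR hy
      rw [← hv, heq]
      exact tFun_head_mem hq hR' hk
    · intro hy
      obtain ⟨k, hk, hv⟩ := exists_head (π := π') (r := r') (d := d) hq hP' hR' hy
      rw [← hv, ← heq]
      exact tFun_head_mem hq hR hk
  -- representatives equal
  have hρ : ∀ i : Fin m, repE d σ q (π i) = repE d σ' q (π' i) := by
    intro i
    have horb : orb σ q (repE d σ q (π i)) = orb σ' q (repE d σ' q (π' i)) :=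
      Finset.Subset.antisymm (block_sub hq hR hR' hqm heq i)
        (block_sub hq hR' hR hqm heq.symm i)
    have e1 : repE d σ q (π i) = (orb σ q (repE d σ q (π i))).min' (orb_nonempty hq) := by
      conv_lhs => rw [← rep_eq_self_of_mem_Rset hq (repE_mem hq hR (π i).isLt)]
      rw [rep, dif_pos (orb_nonempty hq)]
    have e2 : repE d σ' q (π' i) =
        (orb σ' q (repE d σ' q (π' i))).min' (orb_nonempty hq) := by
      conv_lhs => rw [← rep_eq_self_of_mem_Rset hq (repE_mem hq hR' (π' i).isLt)]
      rw [rep, dif_pos (orb_nonempty hq)]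
    rw [e1, e2]
    congr 1
  -- Rset equal
  have hRseteq : Rset σ q = Rset σ' q := by
    have himg : ∀ (τ : Equiv.Perm (Fin n)) (πτ : Equiv.Perm (Fin m)),
        (Rset τ q).card = m →
        Rset τ q = (univ : Finset (Fin m)).image (fun i => repE d τ q (πτ i)) := by
      intro τ πτ hRτ
      ext y
      simp only [Finset.mem_image, mem_univ, true_and]
      constructor
      · intro hy
        obtain ⟨k, hk, hv⟩ := enum_surj hy d
        rw [hRτ] at hk
        refine ⟨πτ.symm ⟨k, hk⟩, ?_⟩
        show repE d τ q ((πτ (πτ.symm ⟨k, hk⟩)) : ℕ) = y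
        rw [Equiv.apply_symm_apply]
        exact hv
      · rintro ⟨i, rfl⟩
        exact repE_mem hq hRτ (πτ i).isLt
    rw [himg σ π hR, himg σ' π' hR']
    apply Finset.image_congr
    intro i _
    exact hρ i
  -- π equal
  have hπ : π = π' := by
    apply Equiv.ext
    intro i
    have h1 : repE d σ q (π i) = repE d σ q (π' i) := by
      rw [hρ i, repE_congr hRseteq]
    exact Fin.ext (repE_inj hR (π i).isLt (π' i).isLt h1)
  -- σ equal
  have hσeq : σ = σ' := by
    apply Equiv.ext
    intro y
    by_cases hy : y ∈ Pset σ q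
    · obtain ⟨k, hk, hv⟩ := exists_head (π := π) (r := r) (d := d) hq hP hR hy
      have hi : (k : ℕ) / q < m := Nat.div_lt_of_lt_mul hk
      have hj : (k : ℕ) % q < q := Nat.mod_lt _ hq
      have hlt : q * ((k : ℕ) / q) + (k : ℕ) % q < n := hbl _ _ hi hj
      have hkeq : k = ⟨q * ((k : ℕ) / q) + (k : ℕ) % q, hlt⟩ :=
        Fin.ext (Nat.div_add_mod _ _).symm
      rw [hkeq] at hv
      have hb := tFun_block (d := d) (σ := σ) (π := π) (r := r) hq hi hj hlt
      have hb' := tFun_block (d := d) (σ := σ') (π := π') (r := r') hq hi hj hlt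
      have hperρ : Function.minimalPeriod (⇑σ) (repE d σ q (π ⟨(k : ℕ) / q, hi⟩)) = q :=
        repE_per hq hR (π _).isLt
      have hperρ' : Function.minimalPeriod (⇑σ')
          (repE d σ' q (π' ⟨(k : ℕ) / q, hi⟩)) = q := repE_per hq hR' (π' _).isLt
      by_cases hj1 : (k : ℕ) % q + 1 < q
      · have hlt1 : q * ((k : ℕ) / q) + ((k : ℕ) % q + 1) < n := hbl _ _ hi hj1
        have s1 : σ y = tFun d q m σ π r ⟨q * ((k : ℕ) / q) + ((k : ℕ) % q + 1), hlt1⟩ := by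
          rw [tFun_block hq hi hj1 hlt1, ← hv, hb]
          rw [show (r ⟨(k : ℕ) / q, hi⟩ : ℕ) + ((k : ℕ) % q + 1)
              = ((r ⟨(k : ℕ) / q, hi⟩ : ℕ) + (k : ℕ) % q) + 1 by omega]
          rw [pow_succ', Equiv.Perm.mul_apply]
        have hv' : tFun d q m σ' π' r' ⟨q * ((k : ℕ) / q) + (k : ℕ) % q, hlt⟩ = y := by
          rw [← hteq]; exact hv
        have s1' : σ' y = tFun d q m σ' π' r' ⟨q * ((k : ℕ) / q) + ((k : ℕ) % q + 1), hlt1⟩ := by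
          rw [tFun_block hq hi hj1 hlt1, ← hv', hb']
          rw [show (r' ⟨(k : ℕ) / q, hi⟩ : ℕ) + ((k : ℕ) % q + 1)
              = ((r' ⟨(k : ℕ) / q, hi⟩ : ℕ) + (k : ℕ) % q) + 1 by omega]
          rw [pow_succ', Equiv.Perm.mul_apply]
        rw [s1, s1', hteq]
      · have hj1' : (k : ℕ) % q + 1 = q := by omega
        have hlt0 : q * ((k : ℕ) / q) + 0 < n := hbl _ _ hi hq
        have s1 : σ y = tFun d q m σ π r ⟨q * ((k : ℕ) / q) + 0, hlt0⟩ := by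
          rw [tFun_block hq hi hq hlt0, ← hv, hb]
          rw [← Equiv.Perm.mul_apply, ← pow_succ']
          rw [show ((r ⟨(k : ℕ) / q, hi⟩ : ℕ) + (k : ℕ) % q) + 1
              = (r ⟨(k : ℕ) / q, hi⟩ : ℕ) + q by omega]
          rw [pow_mod_apply hperρ, Nat.add_mod_right, ← pow_mod_apply hperρ, Nat.add_zero]
        have hv' : tFun d q m σ' π' r' ⟨q * ((k : ℕ) / q) + (k : ℕ) % q, hlt⟩ = y := by
          rw [← hteq]; exact hv
        have s1' : σ' y = tFun d q m σ' π' r' ⟨q * ((k : ℕ) / q) + 0, hlt0⟩ := by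
          rw [tFun_block hq hi hq hlt0, ← hv', hb']
          rw [← Equiv.Perm.mul_apply, ← pow_succ']
          rw [show ((r' ⟨(k : ℕ) / q, hi⟩ : ℕ) + (k : ℕ) % q) + 1
              = (r' ⟨(k : ℕ) / q, hi⟩ : ℕ) + q by omega]
          rw [pow_mod_apply hperρ', Nat.add_mod_right, ← pow_mod_apply hperρ', Nat.add_zero]
        rw [s1, s1', hteq]
    · have hyc : y ∈ univ \ Pset σ q := mem_sdiff.mpr ⟨mem_univ _, hy⟩
      have hcc : (univ \ Pset σ q).card = n - q * m := by
        rw [card_sdiff_of_subset (subset_univ _), card_univ, Fintype.card_fin, hP]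
      obtain ⟨kk, hkk, hvv⟩ := enum_surj hyc d
      rw [hcc] at hkk
      have hlt : q * m + kk < n := by omega
      have s1 : σ y = tFun d q m σ π r ⟨q * m + kk, hlt⟩ := by
        rw [tFun_tail (by omega) hlt, show q * m + kk - q * m = kk by omega]
        show σ y = σ (compE d σ q kk)
        rw [compE, hvv]
      have s1' : σ' y = tFun d q m σ' π' r' ⟨q * m + kk, hlt⟩ := by
        rw [tFun_tail (by omega) hlt, show q * m + kk - q * m = kk by omega]
        show σ' y = σ' (compE d σ' q kk)
        rw [compE, ← hPeq, hvv]
      rw [s1, s1', hteq]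
  -- r equal
  have hr : r = r' := by
    funext i
    have hlt0 : q * (i : ℕ) + 0 < n := hbl _ _ i.isLt hq
    have hb := tFun_block (d := d) (σ := σ) (π := π) (r := r) hq i.isLt hq hlt0
    have hb' := tFun_block (d := d) (σ := σ') (π := π') (r := r') hq i.isLt hq hlt0
    simp only [Fin.eta] at hb hb'
    have h1 : (σ ^ ((r i : ℕ) + 0)) (repE d σ q (π i))
        = (σ' ^ ((r' i : ℕ) + 0)) (repE d σ' q (π' i)) := by
      rw [← hb, ← hb', heq]
    rw [← hρ i, ← hσeq] at h1
    have hperρ : Function.minimalPeriod (⇑σ) (repE d σ q (π i)) = q :=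
      repE_per hq hR (π i).isLt
    have h2 := pow_inj hperρ (by have := (r i).isLt; omega)
      (by have := (r' i).isLt; omega) h1
    exact Fin.ext (by omega)
  exact ⟨hσeq, hπ, hr⟩
end E
end CPQ


open CPQ in
/-- The number of permutations `σ ∈ S_n` with exactly `m` `q`-cycles is at most
`n! / (q^m · m!)`. -/
theorem count_perms_with_m_qcycles (q m n : ℕ) (hq : 1 ≤ q) (hm : 1 ≤ m) (hn : 1 ≤ n) :
    (((univ.filter fun σ : Equiv.Perm (Fin n) => cycleCount σ q = m).card : ℝ)) ≤
      (n.factorial : ℝ) / ((q : ℝ) ^ m * (m.factorial : ℝ)) := by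
  classical
  set A := univ.filter fun σ : Equiv.Perm (Fin n) => cycleCount σ q = m with hA
  have hd : (0 : ℕ) < n := hn
  set d : Fin n := ⟨0, hd⟩ with hd_def
  have key : A.card * (m.factorial * q ^ m) ≤ n.factorial := by
    set T : Finset (Equiv.Perm (Fin n) × Equiv.Perm (Fin m) × (Fin m → Fin q)) :=
      A ×ˢ ((univ : Finset (Equiv.Perm (Fin m))) ×ˢ (univ : Finset (Fin m → Fin q))) with hT
    have hTcard : T.card = A.card * (m.factorial * q ^ m) := by
      rw [hT, Finset.card_product, Finset.card_product, card_univ, card_univ,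
        Fintype.card_perm, Fintype.card_fin, Fintype.card_fun, Fintype.card_fin,
        Fintype.card_fin]
    have hmemσ : ∀ p ∈ T, cycleCount p.1 q = m := by
      intro p hp
      rw [hT, Finset.mem_product] at hp
      exact (Finset.mem_filter.mp hp.1).2
    have hbij : ∀ p ∈ T, Function.Bijective (tFun d q m p.1 p.2.1 p.2.2) := by
      intro p hp
      obtain ⟨hP, hR⟩ := card_facts hq (hmemσ p hp)
      exact tFun_bij hq hP hR
    set E := fun (p : Equiv.Perm (Fin n) × Equiv.Perm (Fin m) × (Fin m → Fin q)) =>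
      if h : Function.Bijective (tFun d q m p.1 p.2.1 p.2.2)
      then Equiv.ofBijective _ h else (1 : Equiv.Perm (Fin n)) with hE_def
    have hle : T.card ≤ (univ : Finset (Equiv.Perm (Fin n))).card := by
      refine Finset.card_le_card_of_injOn E (fun _ _ => mem_univ _) ?_
      intro p hp p' hp' hE
      have hb := hbij p hp
      have hb' := hbij p' hp'
      rw [hE_def] at hE
      simp only [dif_pos hb, dif_pos hb'] at hE
      have hfun : tFun d q m p.1 p.2.1 p.2.2 = tFun d q m p'.1 p'.2.1 p'.2.2 := by
        funext x
        have := congrFun (congrArg (fun (e : Equiv.Perm (Fin n)) => ⇑e) hE) x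
        simpa using this
      obtain ⟨h1, h2, h3⟩ := encode_inj hq (hmemσ p hp) (hmemσ p' hp') hfun
      exact Prod.ext h1 (Prod.ext h2 h3)
    rw [hTcard, Finset.card_univ, Fintype.card_perm, Fintype.card_fin] at hle
    exact hle
  have hpos : (0 : ℝ) < (q : ℝ) ^ m * (m.factorial : ℝ) := by positivity
  rw [le_div_iff₀ hpos]
  calc (A.card : ℝ) * ((q : ℝ) ^ m * (m.factorial : ℝ))
      = ((A.card * (m.factorial * q ^ m) : ℕ) : ℝ) := by push_cast; ring
    _ ≤ ((n.factorial : ℕ) : ℝ) := by exact_mod_cast key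
end

section
/- Fix c ∈ ℝ. For every ε > 0 there exists M₀ = M₀(ε,c) ≥ 1 such that for all M ≥ M₀ and all n ≥ 1, | (1/n!)·∑_{σ ∈ S_n} | ∑_{j=1}^{M} e^{−2jc} T_j(Fix(σ)) | − (1/n!)·∑_{σ ∈ S_n} | ∑_{j=1}^{∞} e^{−2jc} T_j(Fix(σ)) | | ≤ ε, where the inner infinite series converges absolutely for every σ. -/
open Finset

/-- The polynomial `T_j` evaluated at a natural number:
`T_j(N) = ∑_{i=0}^{j} C(N, j−i)·(−1)^i/i!`. -/
noncomputable def T (j : ℕ) (N : ℕ) : ℝ :=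
  ∑ i ∈ range (j + 1), (N.choose (j - i) : ℝ) * (-1 : ℝ) ^ i / (i.factorial : ℝ)

/-- The number of fixed points of a permutation. -/
def fixCount {n : ℕ} (σ : Equiv.Perm (Fin n)) : ℕ :=
  (univ.filter fun x => σ x = x).card

lemma card_fix_superset {n : ℕ} (S : Finset (Fin n)) :
    (univ.filter fun σ : Equiv.Perm (Fin n) => ∀ x ∈ S, σ x = x).card ≤
      (n - S.card).factorial := by
  classical
  rw [← Fintype.card_subtype]
  have hinj : Function.Injective
      (fun σ : {σ : Equiv.Perm (Fin n) // ∀ x ∈ S, σ x = x} =>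
        (σ : Equiv.Perm (Fin n)).subtypePerm (p := fun x => x ∉ S) (by
          intro x
          constructor
          · intro hx hmem
            exact hx (by rw [σ.2 x hmem]; exact hmem)
          · intro hx hmem
            have h1 : (σ : Equiv.Perm (Fin n)) ((σ : Equiv.Perm (Fin n)) x)
                = (σ : Equiv.Perm (Fin n)) x := σ.2 _ hmem
            have h2 : (σ : Equiv.Perm (Fin n)) x = x := (σ : Equiv.Perm (Fin n)).injective h1
            exact hx (h2 ▸ hmem))) := by
    rintro ⟨σ, hσ⟩ ⟨τ, hτ⟩ h
    apply Subtype.ext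
    apply Equiv.ext
    intro x
    by_cases hx : x ∈ S
    · rw [hσ x hx, hτ x hx]
    · have := Equiv.congr_fun h ⟨x, hx⟩
      simpa using Subtype.ext_iff.mp this
  calc Fintype.card {σ : Equiv.Perm (Fin n) // ∀ x ∈ S, σ x = x}
      ≤ Fintype.card (Equiv.Perm {x : Fin n // x ∉ S}) := Fintype.card_le_of_injective _ hinj
    _ = (n - S.card).factorial := by
        rw [Fintype.card_perm]
        congr 1
        rw [Fintype.card_subtype_compl (fun x => x ∈ S)]
        simp [Fintype.card_coe]

lemma sum_choose_fix (n m : ℕ) :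
    (∑ σ : Equiv.Perm (Fin n), (fixCount σ).choose m) * m.factorial ≤ n.factorial := by
  classical
  have h1 : ∀ σ : Equiv.Perm (Fin n), (fixCount σ).choose m =
      ∑ S ∈ powersetCard m (univ : Finset (Fin n)),
        if ∀ x ∈ S, σ x = x then 1 else 0 := by
    intro σ
    rw [← Finset.card_filter, fixCount, ← Finset.card_powersetCard]
    congr 1
    ext S
    simp only [Finset.mem_powersetCard, Finset.mem_filter, Finset.subset_iff,
      Finset.mem_univ, true_and]
    tauto
  have h2 : (∑ σ : Equiv.Perm (Fin n), (fixCount σ).choose m) ≤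
      n.choose m * (n - m).factorial := by
    calc (∑ σ : Equiv.Perm (Fin n), (fixCount σ).choose m)
        = ∑ σ : Equiv.Perm (Fin n), ∑ S ∈ powersetCard m (univ : Finset (Fin n)),
            if ∀ x ∈ S, σ x = x then 1 else 0 := Finset.sum_congr rfl fun σ _ => h1 σ
      _ = ∑ S ∈ powersetCard m (univ : Finset (Fin n)), ∑ σ : Equiv.Perm (Fin n),
            if ∀ x ∈ S, σ x = x then 1 else 0 := Finset.sum_comm
      _ = ∑ S ∈ powersetCard m (univ : Finset (Fin n)),
            (univ.filter fun σ : Equiv.Perm (Fin n) => ∀ x ∈ S, σ x = x).card := by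
          exact Finset.sum_congr rfl fun S _ => (Finset.card_filter _ _).symm
      _ ≤ ∑ _S ∈ powersetCard m (univ : Finset (Fin n)), (n - m).factorial := by
          refine Finset.sum_le_sum fun S hS => ?_
          have h := card_fix_superset S
          rwa [(Finset.mem_powersetCard.mp hS).2] at h
      _ = n.choose m * (n - m).factorial := by
          rw [Finset.sum_const, Finset.card_powersetCard, Finset.card_univ,
            Fintype.card_fin, smul_eq_mul]
  calc (∑ σ : Equiv.Perm (Fin n), (fixCount σ).choose m) * m.factorial
      ≤ n.choose m * (n - m).factorial * m.factorial :=
        Nat.mul_le_mul_right _ h2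
    _ ≤ n.factorial := by
        rcases le_or_gt m n with hmn | hmn
        · rw [show n.choose m * (n - m).factorial * m.factorial
            = n.choose m * m.factorial * (n - m).factorial by ring,
            Nat.choose_mul_factorial_mul_factorial hmn]
        · rw [Nat.choose_eq_zero_of_lt hmn]
          simp

lemma sum_choose_fix_real (n m : ℕ) :
    ∑ σ : Equiv.Perm (Fin n), ((fixCount σ).choose m : ℝ) ≤
      (n.factorial : ℝ) / (m.factorial : ℝ) := by
  rw [le_div_iff₀ (by positivity)]
  exact_mod_cast sum_choose_fix n m

lemma T_abs_le (k N : ℕ) :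
    |T k N| ≤ ∑ i ∈ range (k + 1), (N.choose (k - i) : ℝ) / (i.factorial : ℝ) := by
  refine (Finset.abs_sum_le_sum_abs _ _).trans_eq ?_
  refine Finset.sum_congr rfl fun i _ => ?_
  rw [abs_div, abs_mul, abs_pow, abs_neg, abs_one, one_pow, mul_one,
    Nat.abs_cast, Nat.abs_cast]

lemma sum_abs_T_le (n k : ℕ) :
    ∑ σ : Equiv.Perm (Fin n), |T k (fixCount σ)| ≤
      (n.factorial : ℝ) * 2 ^ k / (k.factorial : ℝ) := by
  have step : ∀ i ∈ range (k + 1),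
      ((n.factorial : ℝ) / ((k - i).factorial : ℝ)) / (i.factorial : ℝ)
        = (n.factorial : ℝ) * (k.choose i : ℝ) / (k.factorial : ℝ) := by
    intro i hi
    have hi' : i ≤ k := Nat.lt_succ_iff.mp (Finset.mem_range.mp hi)
    have hcr : ((k.choose i : ℝ)) * (i.factorial : ℝ) * ((k - i).factorial : ℝ)
        = (k.factorial : ℝ) := by
      exact_mod_cast congrArg (Nat.cast : ℕ → ℝ)
        (Nat.choose_mul_factorial_mul_factorial hi')
    rw [← hcr]
    have h1 : ((i.factorial : ℝ)) ≠ 0 := by positivity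
    have h2 : (((k - i).factorial : ℝ)) ≠ 0 := by positivity
    have h3 : ((k.choose i : ℝ)) ≠ 0 := by
      have := Nat.choose_pos hi'
      positivity
    field_simp
  calc ∑ σ : Equiv.Perm (Fin n), |T k (fixCount σ)|
      ≤ ∑ σ : Equiv.Perm (Fin n), ∑ i ∈ range (k + 1),
          ((fixCount σ).choose (k - i) : ℝ) / (i.factorial : ℝ) :=
        Finset.sum_le_sum fun σ _ => T_abs_le k (fixCount σ)
    _ = ∑ i ∈ range (k + 1), ∑ σ : Equiv.Perm (Fin n),
          ((fixCount σ).choose (k - i) : ℝ) / (i.factorial : ℝ) := Finset.sum_comm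
    _ ≤ ∑ i ∈ range (k + 1),
          ((n.factorial : ℝ) / ((k - i).factorial : ℝ)) / (i.factorial : ℝ) := by
        refine Finset.sum_le_sum fun i _ => ?_
        rw [← Finset.sum_div]
        exact div_le_div_of_nonneg_right (sum_choose_fix_real n (k - i)) (by positivity)
    _ = ∑ i ∈ range (k + 1),
          (n.factorial : ℝ) * (k.choose i : ℝ) / (k.factorial : ℝ) :=
        Finset.sum_congr rfl step
    _ = (n.factorial : ℝ) * 2 ^ k / (k.factorial : ℝ) := by
        rw [← Finset.sum_div, ← Finset.mul_sum]
        congr 2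
        exact_mod_cast Nat.sum_range_choose k

lemma choose_le_two_pow (N m : ℕ) : N.choose m ≤ 2 ^ N := by
  rcases le_or_gt m N with h | h
  · calc N.choose m ≤ ∑ j ∈ range (N + 1), N.choose j :=
        Finset.single_le_sum (fun j _ => Nat.zero_le _)
          (Finset.mem_range.mpr (Nat.lt_succ_of_le h))
    _ = 2 ^ N := Nat.sum_range_choose N
  · rw [Nat.choose_eq_zero_of_lt h]; exact Nat.zero_le _

lemma T_abs_le' (k N : ℕ) :
    |T k N| ≤ (2 : ℝ) ^ k * 2 ^ N / (((k - N).factorial : ℝ)) := by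
  refine (T_abs_le k N).trans ?_
  have hterm : ∀ i ∈ range (k + 1),
      (N.choose (k - i) : ℝ) / (i.factorial : ℝ)
        ≤ (2 : ℝ) ^ N / (((k - N).factorial : ℝ)) := by
    intro i _
    rcases le_or_gt (k - i) N with h | h
    · have h1 : k - N ≤ i := by omega
      have h2 : ((k - N).factorial : ℝ) ≤ (i.factorial : ℝ) := by
        exact_mod_cast Nat.factorial_le h1
      have hnum : (N.choose (k - i) : ℝ) ≤ (2 : ℝ) ^ N := by
        exact_mod_cast choose_le_two_pow N (k - i)
      exact div_le_div₀ (by positivity) hnum (by positivity) h2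
    · rw [Nat.choose_eq_zero_of_lt h]
      simp only [Nat.cast_zero, zero_div]
      positivity
  calc ∑ i ∈ range (k + 1), (N.choose (k - i) : ℝ) / (i.factorial : ℝ)
      ≤ ∑ _i ∈ range (k + 1), (2 : ℝ) ^ N / (((k - N).factorial : ℝ)) :=
        Finset.sum_le_sum hterm
    _ = ((k : ℝ) + 1) * ((2 : ℝ) ^ N / (((k - N).factorial : ℝ))) := by
        rw [Finset.sum_const, Finset.card_range, nsmul_eq_mul]
        push_cast
        ring
    _ ≤ (2 : ℝ) ^ k * 2 ^ N / (((k - N).factorial : ℝ)) := by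
        have hk : ((k : ℝ) + 1) ≤ (2 : ℝ) ^ k := by
          exact_mod_cast (Nat.lt_two_pow_self (n := k))
        rw [div_eq_mul_one_div ((2:ℝ)^k * 2^N), mul_assoc, ← div_eq_mul_one_div]
        exact mul_le_mul_of_nonneg_right hk (by positivity)

lemma summable_shift (b : ℝ) (N : ℕ) :
    Summable (fun k : ℕ => b ^ k / (((k - N).factorial : ℝ))) := by
  rw [← summable_nat_add_iff N]
  refine ((Real.summable_pow_div_factorial b).mul_left (b ^ N)).congr fun i => ?_
  rw [Nat.add_sub_cancel, pow_add]
  ring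

lemma summable_majorant (a : ℝ) (N : ℕ) :
    Summable (fun j : ℕ =>
      (2 : ℝ) ^ N * ((2 * a) ^ (j + 1) / ((((j + 1) - N).factorial : ℝ)))) :=
  ((summable_nat_add_iff 1).2 (summable_shift (2 * a) N)).mul_left _

lemma abs_term_le (c : ℝ) (N : ℕ) (j : ℕ) :
    |Real.exp (-2 * ((j : ℝ) + 1) * c) * T (j + 1) N| ≤
      (2 : ℝ) ^ N * ((2 * Real.exp (-2 * c)) ^ (j + 1)
        / ((((j + 1) - N).factorial : ℝ))) := by
  set a := Real.exp (-2 * c) with ha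
  have hap : 0 < a := Real.exp_pos _
  have hexp : Real.exp (-2 * ((j : ℝ) + 1) * c) = a ^ (j + 1) := by
    rw [ha, ← Real.exp_nat_mul]
    congr 1
    push_cast
    ring
  calc |Real.exp (-2 * ((j : ℝ) + 1) * c) * T (j + 1) N|
      = a ^ (j + 1) * |T (j + 1) N| := by
        rw [abs_mul, hexp, abs_of_pos (pow_pos hap _)]
    _ ≤ a ^ (j + 1) * ((2 : ℝ) ^ (j + 1) * 2 ^ N / ((((j + 1) - N).factorial : ℝ))) :=
        mul_le_mul_of_nonneg_left (T_abs_le' (j + 1) N) (pow_pos hap _).le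
    _ = (2 : ℝ) ^ N * ((2 * a) ^ (j + 1) / ((((j + 1) - N).factorial : ℝ))) := by
        rw [mul_pow]
        ring

lemma conj1 (c : ℝ) (N : ℕ) :
    Summable fun j : ℕ => |Real.exp (-2 * ((j : ℝ) + 1) * c) * T (j + 1) N| :=
  Summable.of_nonneg_of_le (fun _ => abs_nonneg _) (abs_term_le c N)
    (summable_majorant (Real.exp (-2 * c)) N)

lemma sum_abs_term_le (c : ℝ) (n k : ℕ) :
    ∑ σ : Equiv.Perm (Fin n), |Real.exp (-2 * ((k : ℝ) + 1) * c) * T (k + 1) (fixCount σ)|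
      ≤ (n.factorial : ℝ) * ((2 * Real.exp (-2 * c)) ^ (k + 1)
          / (((k + 1).factorial : ℝ))) := by
  set a := Real.exp (-2 * c) with ha
  have hap : 0 < a := Real.exp_pos _
  have hexp : Real.exp (-2 * ((k : ℝ) + 1) * c) = a ^ (k + 1) := by
    rw [ha, ← Real.exp_nat_mul]
    congr 1
    push_cast
    ring
  calc ∑ σ : Equiv.Perm (Fin n), |Real.exp (-2 * ((k : ℝ) + 1) * c) * T (k + 1) (fixCount σ)|
      = a ^ (k + 1) * ∑ σ : Equiv.Perm (Fin n), |T (k + 1) (fixCount σ)| := by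
        rw [Finset.mul_sum]
        refine Finset.sum_congr rfl fun σ _ => ?_
        rw [abs_mul, hexp, abs_of_pos (pow_pos hap _)]
    _ ≤ a ^ (k + 1) * ((n.factorial : ℝ) * 2 ^ (k + 1) / (((k + 1).factorial : ℝ))) :=
        mul_le_mul_of_nonneg_left (sum_abs_T_le n (k + 1)) (pow_pos hap _).le
    _ = (n.factorial : ℝ) * ((2 * a) ^ (k + 1) / (((k + 1).factorial : ℝ))) := by
        rw [mul_pow]
        ring

set_option maxHeartbeats 1000000 in
/-- The series `∑_{j≥1} e^{−2jc} T_j(Fix σ)` converges absolutely, and tails are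
negligible: for every `ε > 0` there is `M₀ ≥ 1` such that for all `M ≥ M₀` and all
`n ≥ 1`, the averages over `S_n` of `|∑_{j=1}^M e^{−2jc} T_j(Fix σ)|` and of
`|∑_{j=1}^∞ e^{−2jc} T_j(Fix σ)|` differ by at most `ε`. -/
theorem neglect_high_degree_polynomials (c : ℝ) :
    (∀ N : ℕ, Summable fun j : ℕ =>
      |Real.exp (-2 * ((j : ℝ) + 1) * c) * T (j + 1) N|) ∧
    ∀ ε > (0 : ℝ), ∃ M₀ : ℕ, 1 ≤ M₀ ∧ ∀ M ≥ M₀, ∀ n : ℕ, 1 ≤ n →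
      abs ((1 / (n.factorial : ℝ)) * (∑ σ : Equiv.Perm (Fin n),
          |∑ j ∈ Icc 1 M, Real.exp (-2 * (j : ℝ) * c) * T j (fixCount σ)|) -
        (1 / (n.factorial : ℝ)) * ∑ σ : Equiv.Perm (Fin n),
          |∑' j : ℕ, Real.exp (-2 * ((j : ℝ) + 1) * c) * T (j + 1) (fixCount σ)|) ≤ ε := by
  classical
  refine ⟨conj1 c, ?_⟩
  intro ε hε
  set a := Real.exp (-2 * c) with ha
  set g : ℕ → ℝ := fun k => (2 * a) ^ (k + 1) / (((k + 1).factorial : ℝ)) with hg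
  have hgsum : Summable g := (summable_nat_add_iff 1).2 (Real.summable_pow_div_factorial (2 * a))
  have htail := tendsto_sum_nat_add g
  obtain ⟨M₁, hM₁⟩ := Metric.tendsto_atTop.mp htail ε hε
  refine ⟨max M₁ 1, le_max_right _ _, ?_⟩
  intro M hM n hn
  have hnfac : (0 : ℝ) < (n.factorial : ℝ) := by positivity
  set F : Equiv.Perm (Fin n) → ℕ → ℝ :=
    fun σ j => Real.exp (-2 * ((j : ℝ) + 1) * c) * T (j + 1) (fixCount σ) with hF
  have hFsummAbs : ∀ σ : Equiv.Perm (Fin n), Summable fun j => |F σ j| :=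
    fun σ => conj1 c (fixCount σ)
  have hFsumm : ∀ σ : Equiv.Perm (Fin n), Summable (F σ) := fun σ => (hFsummAbs σ).of_abs
  have hfin : ∀ σ : Equiv.Perm (Fin n),
      ∑ j ∈ Icc 1 M, Real.exp (-2 * (j : ℝ) * c) * T j (fixCount σ)
        = ∑ j ∈ range M, F σ j := by
    intro σ
    rw [← Finset.Ico_add_one_right_eq_Icc, Finset.sum_Ico_eq_sum_range]
    simp only [Nat.add_sub_cancel, Nat.succ_sub_one]
    refine Finset.sum_congr rfl fun j _ => ?_
    rw [Nat.add_comm 1 j, hF]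
    congr 2
    push_cast
    ring
  have hper : ∀ σ : Equiv.Perm (Fin n),
      abs (|∑ j ∈ range M, F σ j| - |∑' j, F σ j|) ≤ ∑' j, |F σ (j + M)| := by
    intro σ
    refine (abs_abs_sub_abs_le_abs_sub _ _).trans ?_
    have hsplit : (∑ j ∈ range M, F σ j) - ∑' j, F σ j = -(∑' j, F σ (j + M)) := by
      have := Summable.sum_add_tsum_nat_add M (hFsumm σ)
      linarith
    rw [hsplit, abs_neg]
    have hn2 := norm_tsum_le_tsum_norm (f := fun j => F σ (j + M))
      (by simpa [Real.norm_eq_abs] using (summable_nat_add_iff M).2 (hFsummAbs σ))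
    simpa [Real.norm_eq_abs] using hn2
  have hshiftAbs : ∀ σ : Equiv.Perm (Fin n), Summable fun j => |F σ (j + M)| :=
    fun σ => (summable_nat_add_iff M).2 (hFsummAbs σ)
  have hgshift : Summable fun j => (n.factorial : ℝ) * g (j + M) :=
    ((summable_nat_add_iff M).2 hgsum).mul_left _
  have hperk : ∀ j : ℕ, ∑ σ : Equiv.Perm (Fin n), |F σ (j + M)|
      ≤ (n.factorial : ℝ) * g (j + M) := fun j => sum_abs_term_le c n (j + M)
  have hchain :
      abs ((1 / (n.factorial : ℝ)) * (∑ σ : Equiv.Perm (Fin n),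
          |∑ j ∈ Icc 1 M, Real.exp (-2 * (j : ℝ) * c) * T j (fixCount σ)|) -
        (1 / (n.factorial : ℝ)) * ∑ σ : Equiv.Perm (Fin n),
          |∑' j : ℕ, Real.exp (-2 * ((j : ℝ) + 1) * c) * T (j + 1) (fixCount σ)|)
      ≤ ∑' j, g (j + M) := by
    have h1 : (1 / (n.factorial : ℝ)) * (∑ σ : Equiv.Perm (Fin n),
          |∑ j ∈ Icc 1 M, Real.exp (-2 * (j : ℝ) * c) * T j (fixCount σ)|) -
        (1 / (n.factorial : ℝ)) * ∑ σ : Equiv.Perm (Fin n),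
          |∑' j : ℕ, Real.exp (-2 * ((j : ℝ) + 1) * c) * T (j + 1) (fixCount σ)|
        = (1 / (n.factorial : ℝ)) * ∑ σ : Equiv.Perm (Fin n),
            ((|∑ j ∈ range M, F σ j|) - |∑' j, F σ j|) := by
      rw [Finset.sum_sub_distrib, mul_sub]
      congr 2
      exact Finset.sum_congr rfl fun σ _ => by rw [hfin σ]
    rw [h1, abs_mul, abs_of_pos (by positivity : (0:ℝ) < 1 / (n.factorial : ℝ))]
    calc (1 / (n.factorial : ℝ)) * abs (∑ σ : Equiv.Perm (Fin n),
            ((|∑ j ∈ range M, F σ j|) - |∑' j, F σ j|))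
        ≤ (1 / (n.factorial : ℝ)) * ∑ σ : Equiv.Perm (Fin n), ∑' j, |F σ (j + M)| := by
          refine mul_le_mul_of_nonneg_left ?_ (by positivity)
          exact (Finset.abs_sum_le_sum_abs _ _).trans
            (Finset.sum_le_sum fun σ _ => hper σ)
      _ = (1 / (n.factorial : ℝ)) * ∑' j, ∑ σ : Equiv.Perm (Fin n), |F σ (j + M)| := by
          rw [Summable.tsum_finsetSum fun σ _ => hshiftAbs σ]
      _ ≤ (1 / (n.factorial : ℝ)) * ∑' j, (n.factorial : ℝ) * g (j + M) := by
          refine mul_le_mul_of_nonneg_left ?_ (by positivity)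
          exact Summable.tsum_le_tsum hperk (summable_sum fun σ _ => hshiftAbs σ) hgshift
      _ = ∑' j, g (j + M) := by
          rw [tsum_mul_left]
          field_simp
  refine hchain.trans ?_
  have hM₁' := hM₁ M (le_trans (le_max_left _ _) hM)
  rw [Real.dist_eq, sub_zero] at hM₁'
  exact (le_abs_self _).trans hM₁'.le
end

section
/- Let j ≥ 1 and r ≥ 0 be integers. If r ≥ j then |T_j(r)| ≤ 2^r. If r ≤ j then |T_j(r)|/r! ≤ 2^r / (⌊j/2⌋!)². -/
open Finset

lemma fact_sq_le_aux (j a : ℕ) (ha : a ≤ j) :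
    (j / 2).factorial * (j / 2).factorial ≤ a.factorial * (j - a).factorial := by
  have h1 : (j / 2).factorial * (j / 2).factorial
      ≤ (j / 2).factorial * (j - j / 2).factorial :=
    Nat.mul_le_mul_left _ (Nat.factorial_le (by omega))
  refine h1.trans ?_
  have hc : j.choose a ≤ j.choose (j / 2) := Nat.choose_le_middle a j
  have e1 : j.choose a * (a.factorial * (j - a).factorial) = j.factorial := by
    rw [← Nat.choose_mul_factorial_mul_factorial ha, mul_assoc]
  have e2 : j.choose (j / 2) * ((j / 2).factorial * (j - j / 2).factorial)
      = j.factorial := by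
    rw [← Nat.choose_mul_factorial_mul_factorial (Nat.div_le_self j 2), mul_assoc]
  have hpos : 0 < j.choose a := Nat.choose_pos ha
  have := Nat.mul_le_mul_right ((j / 2).factorial * (j - j / 2).factorial) hc
  rw [e2, ← e1] at this
  exact Nat.le_of_mul_le_mul_left this hpos

lemma sum_choose_reflect (j r : ℕ) :
    ∑ i ∈ range (j + 1), r.choose (j - i) = ∑ i ∈ range (j + 1), r.choose i := by
  have := Finset.sum_range_reflect (fun i => r.choose i) (j + 1)
  simpa using this

lemma sum_choose_le (j r : ℕ) (h : j ≤ r) :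
    ∑ i ∈ range (j + 1), r.choose (j - i) ≤ 2 ^ r := by
  rw [sum_choose_reflect]
  calc ∑ i ∈ range (j + 1), r.choose i
      ≤ ∑ i ∈ range (r + 1), r.choose i := by
        apply Finset.sum_le_sum_of_subset
        exact Finset.range_subset_range.mpr (by omega)
    _ = 2 ^ r := Nat.sum_range_choose r

lemma sum_choose_eq (j r : ℕ) (h : r ≤ j) :
    ∑ i ∈ range (j + 1), r.choose (j - i) = 2 ^ r := by
  rw [sum_choose_reflect]
  rw [← Nat.sum_range_choose r]
  symm
  apply Finset.sum_subset (Finset.range_subset_range.mpr (by omega))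
  intro x _ hx
  simp only [Finset.mem_range, not_lt] at hx
  exact Nat.choose_eq_zero_of_lt (by omega)

/-- Bounds on `T_j(r)`: if `r ≥ j` then `|T_j(r)| ≤ 2^r`, and if `r ≤ j` then
`|T_j(r)|/r! ≤ 2^r/(⌊j/2⌋!)²`. -/
theorem T_bounds (j r : ℕ) (hj : 1 ≤ j) :
    (j ≤ r → |T j r| ≤ (2 : ℝ) ^ r) ∧
    (r ≤ j → |T j r| / (r.factorial : ℝ) ≤
      (2 : ℝ) ^ r / ((j / 2).factorial : ℝ) ^ 2) := by
  have key : ∀ i : ℕ, |(r.choose (j - i) : ℝ) * (-1 : ℝ) ^ i / (i.factorial : ℝ)|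
      = (r.choose (j - i) : ℝ) / (i.factorial : ℝ) := by
    intro i
    rw [abs_div, abs_mul, abs_pow, abs_neg, abs_one, one_pow, mul_one,
      Nat.abs_cast, Nat.abs_cast]
  have habs : |T j r| ≤ ∑ i ∈ range (j + 1),
      (r.choose (j - i) : ℝ) / (i.factorial : ℝ) := by
    refine (Finset.abs_sum_le_sum_abs _ _).trans ?_
    exact le_of_eq (Finset.sum_congr rfl fun i _ => key i)
  constructor
  · intro hjr
    refine habs.trans ?_
    have h1 : ∑ i ∈ range (j + 1), (r.choose (j - i) : ℝ) / (i.factorial : ℝ)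
        ≤ ∑ i ∈ range (j + 1), (r.choose (j - i) : ℝ) := by
      apply Finset.sum_le_sum
      intro i _
      exact div_le_self (Nat.cast_nonneg _) (Nat.one_le_cast.mpr i.factorial_pos)
    refine h1.trans ?_
    have := sum_choose_le j r hjr
    calc ∑ i ∈ range (j + 1), (r.choose (j - i) : ℝ)
        = ((∑ i ∈ range (j + 1), r.choose (j - i) : ℕ) : ℝ) := by push_cast; ring
      _ ≤ ((2 ^ r : ℕ) : ℝ) := by exact_mod_cast this
      _ = (2 : ℝ) ^ r := by push_cast; ring
  · intro hrj
    have hr : (0 : ℝ) < (r.factorial : ℝ) := by positivity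
    have hq : (0 : ℝ) < ((j / 2).factorial : ℝ) ^ 2 := by positivity
    have step1 : |T j r| / (r.factorial : ℝ)
        ≤ (∑ i ∈ range (j + 1), (r.choose (j - i) : ℝ) / (i.factorial : ℝ))
          / (r.factorial : ℝ) := by gcongr
    refine step1.trans ?_
    rw [Finset.sum_div]
    have step2 : ∀ i ∈ range (j + 1),
        (r.choose (j - i) : ℝ) / (i.factorial : ℝ) / (r.factorial : ℝ)
        ≤ (r.choose (j - i) : ℝ) / ((j / 2).factorial : ℝ) ^ 2 := by
      intro i _
      rw [div_div]
      by_cases hc : r.choose (j - i) = 0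
      · simp [hc]
      · have hi : j - r ≤ i := by
          by_contra h
          push_neg at h
          exact hc (Nat.choose_eq_zero_of_lt (by omega))
        have hnat : (j / 2).factorial * (j / 2).factorial
            ≤ i.factorial * r.factorial := by
          calc (j / 2).factorial * (j / 2).factorial
              ≤ r.factorial * (j - r).factorial := fact_sq_le_aux j r hrj
            _ = (j - r).factorial * r.factorial := mul_comm _ _
            _ ≤ i.factorial * r.factorial :=
                Nat.mul_le_mul_right _ (Nat.factorial_le hi)
        have hreal : ((j / 2).factorial : ℝ) ^ 2
            ≤ (i.factorial : ℝ) * (r.factorial : ℝ) := by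
          rw [sq]
          exact_mod_cast hnat
        exact div_le_div_of_nonneg_left (Nat.cast_nonneg _) hq hreal
    refine (Finset.sum_le_sum step2).trans ?_
    rw [← Finset.sum_div]
    have : ∑ i ∈ range (j + 1), (r.choose (j - i) : ℝ) = (2 : ℝ) ^ r := by
      have := sum_choose_eq j r hrj
      calc ∑ i ∈ range (j + 1), (r.choose (j - i) : ℝ)
          = ((∑ i ∈ range (j + 1), r.choose (j - i) : ℕ) : ℝ) := by push_cast; ring
        _ = ((2 ^ r : ℕ) : ℝ) := by exact_mod_cast this
        _ = (2 : ℝ) ^ r := by push_cast; ring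
    rw [this]
end

section
/- Let c ∈ ℝ and N ∈ ℕ. Then the series ∑_{j=1}^{∞} e^{−2jc}·T_j(N) converges absolutely and ∑_{j=1}^{∞} e^{−2jc}·T_j(N) = e^{−e^{−2c}}·(1 + e^{−2c})^N − 1. -/
set_option maxHeartbeats 1000000
set_option maxRecDepth 4000

open Finset

/-- For every `c ∈ ℝ` and `N ∈ ℕ`, the series `∑_{j≥1} e^{−2jc}·T_j(N)` converges
absolutely and equals `e^{−e^{−2c}}·(1 + e^{−2c})^N − 1`. -/
theorem T_series_sum (c : ℝ) (N : ℕ) :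
    (Summable fun j : ℕ => |Real.exp (-2 * ((j : ℝ) + 1) * c) * T (j + 1) N|) ∧
    ∑' j : ℕ, Real.exp (-2 * ((j : ℝ) + 1) * c) * T (j + 1) N =
      Real.exp (-Real.exp (-2 * c)) * (1 + Real.exp (-2 * c)) ^ N - 1 := by
  set x : ℝ := Real.exp (-2 * c) with hx
  have hxpos : 0 < x := Real.exp_pos _
  -- the two factor series
  set f : ℕ → ℝ := fun k => (N.choose k : ℝ) * x ^ k with hf
  set g : ℕ → ℝ := fun i => (-x) ^ i / (i.factorial : ℝ) with hg
  have hfs : Summable fun k => ‖f k‖ := by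
    apply summable_of_ne_finset_zero (s := range (N + 1))
    intro k hk
    simp only [mem_range, not_lt] at hk
    simp [hf, Nat.choose_eq_zero_of_lt (by omega : N < k)]
  have hgs : Summable fun i => ‖g i‖ := by
    have := Real.summable_pow_div_factorial |x|
    refine this.congr fun i => ?_
    simp [hg, abs_div, abs_pow]
  -- Cauchy product
  have hcauchy := tsum_mul_tsum_eq_tsum_sum_antidiagonal_of_summable_norm hfs hgs
  have hsum_norm := summable_norm_sum_mul_antidiagonal_of_summable_norm hfs hgs
  -- identify the Cauchy product terms with x^n * T n N
  have hterm : ∀ n : ℕ, (∑ kl ∈ Finset.HasAntidiagonal.antidiagonal n, f kl.1 * g kl.2) = x ^ n * T n N := by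
    intro n
    rw [← Finset.Nat.sum_antidiagonal_swap]
    simp only [Prod.fst_swap, Prod.snd_swap]
    rw [Finset.Nat.sum_antidiagonal_eq_sum_range_succ (fun i k => f k * g i)]
    rw [T, Finset.mul_sum]
    refine Finset.sum_congr rfl fun i hi => ?_
    simp only [mem_range] at hi
    have hineq : i ≤ n := by omega
    have hxsplit : x ^ n = x ^ (n - i) * x ^ i := by
      rw [← pow_add, Nat.sub_add_cancel hineq]
    have hneg : (-x) ^ i = (-1) ^ i * x ^ i := by rw [neg_pow]
    simp only [hf, hg]
    rw [hneg, hxsplit]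
    ring
  -- sum of f
  have hftsum : (∑' k, f k) = (1 + x) ^ N := by
    rw [tsum_eq_sum (s := range (N + 1)) (by
      intro k hk
      simp only [mem_range, not_lt] at hk
      simp [hf, Nat.choose_eq_zero_of_lt (by omega : N < k)])]
    rw [add_comm (1:ℝ) x, add_pow]
    exact Finset.sum_congr rfl fun k _ => by simp [hf]; ring
  -- sum of g
  have hgtsum : (∑' i, g i) = Real.exp (-x) := by
    rw [Real.exp_eq_exp_ℝ, NormedSpace.exp_eq_tsum_div]
  -- total series value
  have htotal : (∑' n, x ^ n * T n N) = Real.exp (-x) * (1 + x) ^ N := by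
    have : (∑' n, x ^ n * T n N) = ∑' n, ∑ kl ∈ Finset.HasAntidiagonal.antidiagonal n, f kl.1 * g kl.2 :=
      tsum_congr fun n => (hterm n).symm
    rw [this, ← hcauchy, hftsum, hgtsum, mul_comm]
  have hsum : Summable fun n => x ^ n * T n N := by
    have := hsum_norm.of_norm
    exact this.congr hterm
  -- reindex exp(-2(j+1)c) = x^(j+1)
  have hexp : ∀ j : ℕ, Real.exp (-2 * ((j : ℝ) + 1) * c) = x ^ (j + 1) := by
    intro j
    rw [hx, ← Real.exp_nat_mul]
    congr 1
    push_cast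
    ring
  have hT0 : x ^ 0 * T 0 N = 1 := by simp [T]
  constructor
  · have h1 : Summable fun j : ℕ => x ^ (j + 1) * T (j + 1) N :=
      ((summable_nat_add_iff (f := fun n => x ^ n * T n N) 1).mpr hsum)
    have := h1.abs
    exact this.congr fun j => by rw [hexp j]
  · have h1 : Summable fun j : ℕ => x ^ (j + 1) * T (j + 1) N :=
      ((summable_nat_add_iff (f := fun n => x ^ n * T n N) 1).mpr hsum)
    have hsplit := Summable.tsum_eq_zero_add hsum
    rw [hT0] at hsplit
    have : (∑' j : ℕ, Real.exp (-2 * ((j : ℝ) + 1) * c) * T (j + 1) N)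
        = ∑' j : ℕ, x ^ (j + 1) * T (j + 1) N :=
      tsum_congr fun j => by rw [hexp j]
    rw [this]
    have : (∑' j : ℕ, x ^ (j + 1) * T (j + 1) N) = (∑' n, x ^ n * T n N) - 1 := by
      rw [hsplit]; ring
    rw [this, htotal, hx]
end

section
/- Fix c ∈ ℝ and define f_c : ℕ → ℝ by f_c(x) = e^{−e^{−2c}}·(1 + e^{−2c})^x − 1. Then, as n → ∞, (1/n!)·∑_{σ ∈ S_n} |f_c(Fix(σ))| converges to 𝔼|f_c(Poiss(1))| = ∑_{r=0}^{∞} (e^{−1}/r!)·|f_c(r)|. -/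
open Finset

open Equiv Filter in
private lemma fps_fiber_card {n : ℕ} (S : Finset (Fin n)) :
    (univ.filter fun σ : Perm (Fin n) => (univ.filter fun x => σ x = x) = S).card
      = numDerangements (n - S.card) := by
  have e1 : {σ : Perm (Fin n) // (univ.filter fun x => σ x = x) = S}
      ≃ derangements {a : Fin n // a ∉ S} := by
    refine (Equiv.subtypeEquivRight ?_).trans
      (derangements.subtypeEquiv (fun a : Fin n => a ∉ S)).symm
    intro f
    simp [Finset.ext_iff, Function.mem_fixedPoints, Function.IsFixedPt, not_not, Iff.comm]
  rw [← Fintype.card_subtype, Fintype.card_congr e1, card_derangements_eq_numDerangements]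
  congr 1
  simp [Fintype.card_subtype_compl]

open Equiv Filter in
private lemma fps_count_card {n r : ℕ} :
    (univ.filter fun σ : Equiv.Perm (Fin n) => fixCount σ = r).card
      = n.choose r * numDerangements (n - r) := by
  rw [Finset.card_eq_sum_card_fiberwise
    (f := fun σ : Perm (Fin n) => univ.filter fun x => σ x = x)
    (t := Finset.powersetCard r univ)
    (fun σ hσ => by
      rw [Finset.mem_coe, Finset.mem_filter] at hσ
      exact Finset.mem_coe.2 (Finset.mem_powersetCard_univ.2 hσ.2))]
  have : ∀ S ∈ Finset.powersetCard r (univ : Finset (Fin n)),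
      ((univ.filter fun σ : Equiv.Perm (Fin n) => fixCount σ = r).filter
        (fun σ => (univ.filter fun x => σ x = x) = S)).card = numDerangements (n - r) := by
    intro S hS
    have hSc : S.card = r := Finset.mem_powersetCard_univ.1 hS
    rw [Finset.filter_filter,
      Finset.filter_congr (q := fun σ : Perm (Fin n) => (univ.filter fun x => σ x = x) = S)
        (fun σ _ => by
          simp only [and_iff_right_iff_imp]
          intro h; rw [fixCount, h, hSc]),
      fps_fiber_card, hSc]
  rw [Finset.sum_congr rfl this, Finset.sum_const, Finset.card_powersetCard, Finset.card_univ,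
    Fintype.card_fin, smul_eq_mul]

private lemma fps_numDerangements_le_factorial (m : ℕ) : numDerangements m ≤ m.factorial := by
  rw [← card_derangements_fin_eq_numDerangements]
  calc Fintype.card (derangements (Fin m)) ≤ Fintype.card (Equiv.Perm (Fin m)) :=
        Fintype.card_le_of_injective _ Subtype.val_injective
    _ = m.factorial := by rw [Fintype.card_perm, Fintype.card_fin]

private lemma fps_ratio {n r : ℕ} (hr : r ≤ n) :
    ((n.choose r * numDerangements (n - r) : ℕ) : ℝ) / n.factorial
      = (numDerangements (n - r) : ℝ) / (n - r).factorial * (1 / r.factorial) := by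
  have h : ((n.choose r : ℝ) * r.factorial * (n - r).factorial) = n.factorial := by
    exact_mod_cast Nat.choose_mul_factorial_mul_factorial hr
  have h1 : (n.factorial : ℝ) ≠ 0 := Nat.cast_ne_zero.2 n.factorial_ne_zero
  have h2 : ((n - r).factorial : ℝ) ≠ 0 := Nat.cast_ne_zero.2 (n - r).factorial_ne_zero
  have h3 : (r.factorial : ℝ) ≠ 0 := Nat.cast_ne_zero.2 r.factorial_ne_zero
  field_simp
  push_cast
  linear_combination (numDerangements (n - r) : ℝ) * h

/-- With `f_c(x) = e^{−e^{−2c}}·(1 + e^{−2c})^x − 1`, the average of `|f_c(Fix σ)|`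
over `S_n` converges, as `n → ∞`, to the expectation `𝔼|f_c(Poiss(1))|
= ∑_{r≥0} (e^{−1}/r!)·|f_c(r)|`. -/
theorem fixed_points_poisson_limit (c : ℝ) :
    Filter.Tendsto
      (fun n : ℕ =>
        (1 / (n.factorial : ℝ)) * ∑ σ : Equiv.Perm (Fin n),
          |Real.exp (-Real.exp (-2 * c)) * (1 + Real.exp (-2 * c)) ^ (fixCount σ) - 1|)
      Filter.atTop
      (nhds (∑' r : ℕ, Real.exp (-1) / (r.factorial : ℝ) *
        |Real.exp (-Real.exp (-2 * c)) * (1 + Real.exp (-2 * c)) ^ r - 1|)) := by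
  set lam : ℝ := Real.exp (-2 * c) with hlam
  have hlam0 : 0 < lam := Real.exp_pos _
  set g : ℕ → ℝ := fun r => |Real.exp (-lam) * (1 + lam) ^ r - 1| with hg
  set F : ℕ → ℕ → ℝ := fun n r =>
    if r ≤ n then (numDerangements (n - r) : ℝ) / (n - r).factorial * (g r / r.factorial)
    else 0 with hF
  -- the average equals the (finitely supported) tsum of F n
  have havg : ∀ n : ℕ,
      (1 / (n.factorial : ℝ)) * ∑ σ : Equiv.Perm (Fin n), g (fixCount σ) = ∑' r, F n r := by
    intro n
    have hsupp : ∀ r ∉ Finset.range (n + 1), F n r = 0 := by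
      intro r hr
      rw [Finset.mem_range, not_lt] at hr
      simp only [hF, if_neg (by omega : ¬ r ≤ n)]
    rw [tsum_eq_sum hsupp]
    have hfib : ∑ σ : Equiv.Perm (Fin n), g (fixCount σ)
        = ∑ r ∈ Finset.range (n + 1),
            ((univ.filter fun σ : Equiv.Perm (Fin n) => fixCount σ = r).card : ℝ) * g r := by
      rw [← Finset.sum_fiberwise_of_maps_to (g := fixCount) (t := Finset.range (n + 1))
        (fun σ _ => Finset.mem_range.2 (Nat.lt_succ_of_le (by
          simpa [fixCount, Finset.card_univ] using
            Finset.card_filter_le (univ : Finset (Fin n)) (fun x => σ x = x))))]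
      refine Finset.sum_congr rfl fun r _ => ?_
      rw [Finset.sum_congr rfl (fun σ hσ => by
        rw [(Finset.mem_filter.1 hσ).2]), Finset.sum_const, nsmul_eq_mul]
    rw [hfib, Finset.mul_sum]
    refine Finset.sum_congr rfl fun r hr => ?_
    have hrn : r ≤ n := Nat.lt_succ_iff.1 (Finset.mem_range.1 hr)
    rw [hF]
    simp only [if_pos hrn]
    rw [fps_count_card, ← mul_assoc, mul_comm (1 / (n.factorial : ℝ)), mul_one_div,
      fps_ratio hrn]
    ring
  -- dominated convergence
  have hbound_summable : Summable (fun r : ℕ => (Real.exp (-lam) + 1) * ((1 + lam) ^ r / r.factorial)) :=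
    (Real.summable_pow_div_factorial (1 + lam)).mul_left _
  have hg_nonneg : ∀ r, 0 ≤ g r := fun r => abs_nonneg _
  have hg_le : ∀ r : ℕ, g r / r.factorial ≤ (Real.exp (-lam) + 1) * ((1 + lam) ^ r / r.factorial) := by
    intro r
    rw [mul_div_assoc']
    refine div_le_div_of_nonneg_right ?_ (by positivity)
    have h1 : (1 : ℝ) ≤ (1 + lam) ^ r := one_le_pow₀ (by linarith : (1:ℝ) ≤ 1 + lam)
    have h2 : 0 ≤ Real.exp (-lam) * (1 + lam) ^ r := by positivity
    calc g r ≤ Real.exp (-lam) * (1 + lam) ^ r + 1 := by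
          rw [hg]; exact abs_sub _ _ |>.trans (by rw [abs_one, abs_of_nonneg h2])
      _ ≤ (Real.exp (-lam) + 1) * (1 + lam) ^ r := by nlinarith
  have hD_le : ∀ m : ℕ, (numDerangements m : ℝ) / m.factorial ≤ 1 := by
    intro m
    rw [div_le_one (by positivity)]
    exact_mod_cast fps_numDerangements_le_factorial m
  have htendsto : Filter.Tendsto (fun n => ∑' r, F n r) Filter.atTop
      (nhds (∑' r : ℕ, Real.exp (-1) * (g r / r.factorial))) := by
    refine tendsto_tsum_of_dominated_convergence
      (bound := fun r : ℕ => (Real.exp (-lam) + 1) * ((1 + lam) ^ r / r.factorial))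
      hbound_summable ?_ ?_
    · intro r
      have h1 : Filter.Tendsto (fun n : ℕ => (numDerangements (n - r) : ℝ) / (n - r).factorial)
          Filter.atTop (nhds (Real.exp (-1))) :=
        numDerangements_tendsto_inv_e.comp (Filter.tendsto_sub_atTop_nat r)
      refine (h1.mul_const (g r / r.factorial)).congr' ?_
      filter_upwards [Filter.eventually_ge_atTop r] with n hn
      rw [hF]; simp only [if_pos hn]
    · refine Filter.Eventually.of_forall fun n => fun r => ?_
      rw [hF]
      by_cases hrn : r ≤ n
      · simp only [if_pos hrn]
        rw [Real.norm_eq_abs, abs_of_nonneg (by positivity)]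
        calc (numDerangements (n - r) : ℝ) / (n - r).factorial * (g r / r.factorial)
            ≤ 1 * (g r / r.factorial) :=
              mul_le_mul_of_nonneg_right (hD_le _) (by positivity)
          _ = g r / r.factorial := one_mul _
          _ ≤ _ := hg_le r
      · simp only [if_neg hrn, norm_zero]
        positivity
  have hfinal : (∑' r : ℕ, Real.exp (-1) * (g r / r.factorial))
      = ∑' r : ℕ, Real.exp (-1) / (r.factorial : ℝ) * g r := by
    refine tsum_congr fun r => ?_
    ring
  rw [← hfinal]
  exact htendsto.congr fun n => (havg n).symm
end
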